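/- arXiv:math/9909181 — 10 statements merged into one kernel-verified Lean document; each statement's English description precedes it below -/
import Mathlib

section
/- For every smooth function f on [0,1] with f(0)=0, the inequality ∫₀¹ (1-x²) (f'(x))² dx ≥ 2 ∫₀¹ f(x)² dx holds. -/
open Set intervalIntegral Filter Topology

theorem stmt_0 (f f' : ℝ → ℝ)
    (hd : ∀ x ∈ Set.Icc (0:ℝ) 1, HasDerivAt f (f' x) x)
    (hc : ContinuousOn f' (Set.Icc (0:ℝ) 1))
    (h0 : f 0 = 0) :
    ∫ x in (0:ℝ)..1, (1 - x ^ 2) * (f' x) ^ 2 ≥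
      2 * ∫ x in (0:ℝ)..1, (f x) ^ 2 := by
  have hfc : ContinuousOn f (Set.Icc (0:ℝ) 1) := fun x hx =>
    (hd x hx).continuousAt.continuousWithinAt
  set g : ℝ → ℝ := fun x => (1 - x ^ 2) * (f' x) ^ 2 - 2 * (f x) ^ 2 with hgdef
  have hgc : ContinuousOn g (Set.Icc (0:ℝ) 1) := by
    apply ContinuousOn.sub
    · exact (continuousOn_const.sub (continuousOn_pow 2)).mul (hc.pow 2)
    · exact continuousOn_const.mul (hfc.pow 2)
  have huIcc : Set.uIcc (0:ℝ) 1 = Set.Icc 0 1 := by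
    rw [Set.uIcc_of_le]; norm_num
  have hgi : IntervalIntegrable g MeasureTheory.volume 0 1 := by
    apply ContinuousOn.intervalIntegrable; rw [huIcc]; exact hgc
  -- key estimate on [ε, 1]
  set F : ℝ → ℝ := fun x => (1 - x ^ 2) * (f x) ^ 2 / x with hFdef
  have key : ∀ ε ∈ Set.Ioc (0:ℝ) 1, -F ε ≤ ∫ x in ε..1, g x := by
    intro ε hε
    obtain ⟨hε0, hε1⟩ := hε
    have hsub : Set.Icc ε 1 ⊆ Set.Icc (0:ℝ) 1 :=
      Set.Icc_subset_Icc (le_of_lt hε0) le_rfl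
    have huIcc2 : Set.uIcc ε 1 = Set.Icc ε 1 := Set.uIcc_of_le hε1
    set G : ℝ → ℝ := fun x =>
      ((-(2 * x) * (f x) ^ 2 + (1 - x ^ 2) * (2 * f x * f' x)) * x
        - (1 - x ^ 2) * (f x) ^ 2 * 1) / x ^ 2 with hGdef
    have hF : ∀ x ∈ Set.Icc ε 1, HasDerivAt F (G x) x := by
      intro x hx
      have hx0 : x ≠ 0 := ne_of_gt (lt_of_lt_of_le hε0 hx.1)
      have h1 : HasDerivAt (fun x : ℝ => (1 - x ^ 2) * (f x) ^ 2)
          (-(2 * x) * (f x) ^ 2 + (1 - x ^ 2) * (2 * f x * f' x)) x := by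
        have ha : HasDerivAt (fun x : ℝ => 1 - x ^ 2) (-(2 * x)) x := by
          simpa using (hasDerivAt_pow 2 x).const_sub (1:ℝ)
        have hb : HasDerivAt (fun x => (f x) ^ 2) (2 * f x * f' x) x := by
          simpa using (hd x (hsub hx)).fun_pow 2
        exact ha.mul hb
      have := h1.fun_div (hasDerivAt_id' (x := x)) hx0
      simpa [hGdef] using this
    have hGc : ContinuousOn G (Set.Icc ε 1) := by
      apply ContinuousOn.div
      · apply ContinuousOn.sub
        · apply ContinuousOn.mul _ continuousOn_id
          apply ContinuousOn.add
          · exact (continuousOn_const.mul continuousOn_id).neg.mul ((hfc.mono hsub).pow 2)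
          · exact (continuousOn_const.sub (continuousOn_pow 2)).mul
              ((continuousOn_const.mul (hfc.mono hsub)).mul (hc.mono hsub))
        · exact ((continuousOn_const.sub (continuousOn_pow 2)).mul
            ((hfc.mono hsub).pow 2)).mul continuousOn_const
      · exact continuousOn_pow 2
      · intro x hx
        exact pow_ne_zero 2 (ne_of_gt (lt_of_lt_of_le hε0 hx.1))
    have hGi : IntervalIntegrable G MeasureTheory.volume ε 1 := by
      apply ContinuousOn.intervalIntegrable; rw [huIcc2]; exact hGc
    have hgi2 : IntervalIntegrable g MeasureTheory.volume ε 1 := by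
      apply ContinuousOn.intervalIntegrable; rw [huIcc2]; exact hgc.mono hsub
    have hftc : ∫ x in ε..1, G x = F 1 - F ε := by
      apply intervalIntegral.integral_eq_sub_of_hasDerivAt
      · intro x hx; exact hF x (huIcc2 ▸ hx)
      · exact hGi
    have hF1 : F 1 = 0 := by simp [hFdef]
    have hdiff : 0 ≤ ∫ x in ε..1, (g x - G x) := by
      apply intervalIntegral.integral_nonneg hε1
      intro x hx
      have hx0 : x ≠ 0 := ne_of_gt (lt_of_lt_of_le hε0 hx.1)
      have hid : g x - G x = (1 - x ^ 2) * (f' x - f x / x) ^ 2 := by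
        simp only [hgdef, hGdef]
        field_simp
        ring
      rw [hid]
      have h1x : (0:ℝ) ≤ 1 - x ^ 2 := by nlinarith [hx.1, hx.2, hε0]
      exact mul_nonneg h1x (sq_nonneg _)
    rw [intervalIntegral.integral_sub hgi2 hGi, hftc, hF1] at hdiff
    linarith
  -- the slope limit
  have hslope : Tendsto (fun ε => f ε / ε) (𝓝[>] (0:ℝ)) (𝓝 (f' 0)) := by
    have h := (hd 0 (by norm_num)).hasDerivWithinAt (s := Set.Ioi 0)
    have h2 := hasDerivWithinAt_iff_tendsto_slope.mp h
    have hset : Set.Ioi (0:ℝ) \ {0} = Set.Ioi 0 := by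
      apply Set.diff_singleton_eq_self; simp
    rw [hset] at h2
    apply h2.congr
    intro ε
    simp [slope, h0, div_eq_inv_mul]
  -- boundary term tends to 0
  have hFt : Tendsto F (𝓝[>] (0:ℝ)) (𝓝 0) := by
    have h1 : Tendsto (fun ε : ℝ => (1 - ε ^ 2) * (ε * (f ε / ε) ^ 2))
        (𝓝[>] (0:ℝ)) (𝓝 ((1 - 0 ^ 2) * (0 * (f' 0) ^ 2))) := by
      apply Tendsto.mul
      · exact ((continuous_const.sub (continuous_pow 2)).tendsto 0).mono_left
          nhdsWithin_le_nhds
      · exact (tendsto_id.mono_left nhdsWithin_le_nhds).mul (hslope.pow 2)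
    have h2 : ((1:ℝ) - 0 ^ 2) * (0 * (f' 0) ^ 2) = 0 := by ring
    rw [h2] at h1
    apply h1.congr'
    filter_upwards [self_mem_nhdsWithin] with ε hε
    have hε0 : ε ≠ 0 := ne_of_gt hε
    simp only [hFdef]
    field_simp
  -- the truncated integral tends to the full one
  obtain ⟨M, hM⟩ := isCompact_Icc.exists_bound_of_continuousOn hgc
  have hint0 : Tendsto (fun ε => ∫ x in (0:ℝ)..ε, g x) (𝓝[>] (0:ℝ)) (𝓝 0) := by
    apply squeeze_zero_norm' (a := fun ε => M * ε)
    · filter_upwards [Ioc_mem_nhdsGT_of_mem (Set.left_mem_Ico.mpr zero_lt_one)]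
        with ε hε
      have hb : ∀ x ∈ Set.uIoc (0:ℝ) ε, ‖g x‖ ≤ M := by
        intro x hx
        rw [Set.uIoc_of_le (le_of_lt hε.1)] at hx
        exact hM x ⟨le_of_lt hx.1, le_trans hx.2 hε.2⟩
      calc ‖∫ x in (0:ℝ)..ε, g x‖ ≤ M * |ε - 0| :=
            intervalIntegral.norm_integral_le_of_norm_le_const hb
        _ = M * ε := by rw [sub_zero, abs_of_pos hε.1]
    · have : Tendsto (fun ε : ℝ => M * ε) (𝓝 0) (𝓝 (M * 0)) :=
        (continuous_const.mul continuous_id).tendsto 0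
      rw [mul_zero] at this
      exact this.mono_left nhdsWithin_le_nhds
  have hsplit : ∀ ε ∈ Set.Ioc (0:ℝ) 1,
      (∫ x in ε..1, g x) = (∫ x in (0:ℝ)..1, g x) - ∫ x in (0:ℝ)..ε, g x := by
    intro ε hε
    have h1 : IntervalIntegrable g MeasureTheory.volume 0 ε :=
      hgi.mono_set (by
        rw [huIcc, Set.uIcc_of_le (le_of_lt hε.1)]
        exact Set.Icc_subset_Icc le_rfl hε.2)
    have h2 : IntervalIntegrable g MeasureTheory.volume ε 1 :=
      hgi.mono_set (by
        rw [huIcc, Set.uIcc_of_le hε.2]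
        exact Set.Icc_subset_Icc (le_of_lt hε.1) le_rfl)
    rw [← intervalIntegral.integral_add_adjacent_intervals h1 h2]
    ring
  have hlim : Tendsto (fun ε => ∫ x in ε..1, g x) (𝓝[>] (0:ℝ))
      (𝓝 (∫ x in (0:ℝ)..1, g x)) := by
    have h1 : Tendsto (fun ε => (∫ x in (0:ℝ)..1, g x) - ∫ x in (0:ℝ)..ε, g x)
        (𝓝[>] (0:ℝ)) (𝓝 ((∫ x in (0:ℝ)..1, g x) - 0)) :=
      tendsto_const_nhds.sub hint0
    rw [sub_zero] at h1
    apply h1.congr'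
    filter_upwards [Ioc_mem_nhdsGT_of_mem (Set.left_mem_Ico.mpr zero_lt_one)]
      with ε hε
    exact (hsplit ε hε).symm
  have hnFt : Tendsto (fun ε => -F ε) (𝓝[>] (0:ℝ)) (𝓝 0) := by
    simpa using hFt.neg
  have h0le : (0:ℝ) ≤ ∫ x in (0:ℝ)..1, g x := by
    apply le_of_tendsto_of_tendsto hnFt hlim
    filter_upwards [Ioc_mem_nhdsGT_of_mem (Set.left_mem_Ico.mpr zero_lt_one)]
      with ε hε
    exact key ε hε
  -- conclude
  have hi1 : IntervalIntegrable (fun x => (1 - x ^ 2) * (f' x) ^ 2)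
      MeasureTheory.volume 0 1 := by
    apply ContinuousOn.intervalIntegrable; rw [huIcc]
    exact (continuousOn_const.sub (continuousOn_pow 2)).mul (hc.pow 2)
  have hi2 : IntervalIntegrable (fun x => 2 * (f x) ^ 2)
      MeasureTheory.volume 0 1 := by
    apply ContinuousOn.intervalIntegrable; rw [huIcc]
    exact continuousOn_const.mul (hfc.pow 2)
  have hsplit2 : (∫ x in (0:ℝ)..1, g x)
      = (∫ x in (0:ℝ)..1, (1 - x ^ 2) * (f' x) ^ 2)
        - ∫ x in (0:ℝ)..1, 2 * (f x) ^ 2 :=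
    intervalIntegral.integral_sub hi1 hi2
  have hconst : (∫ x in (0:ℝ)..1, 2 * (f x) ^ 2)
      = 2 * ∫ x in (0:ℝ)..1, (f x) ^ 2 :=
    intervalIntegral.integral_const_mul 2 _
  rw [hsplit2, hconst] at h0le
  linarith
end

section
/- For every smooth function f on [0,1] with f(0)=0, the inequality ∫₀¹ (1-x²)² (f'(x))² dx ≥ ∫₀¹ f(x)² dx holds. -/
open Set MeasureTheory intervalIntegral

theorem stmt_1 (f f' : ℝ → ℝ)
    (hd : ∀ x ∈ Set.Icc (0:ℝ) 1, HasDerivAt f (f' x) x)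
    (hc : ContinuousOn f' (Set.Icc (0:ℝ) 1))
    (h0 : f 0 = 0) :
    ∫ x in (0:ℝ)..1, (1 - x ^ 2) ^ 2 * (f' x) ^ 2 ≥
      ∫ x in (0:ℝ)..1, (f x) ^ 2 := by
  obtain ⟨C, hC⟩ := (isCompact_Icc).exists_bound_of_continuousOn hc
  set M := max C 0 with hMdef
  have hM0 : (0:ℝ) ≤ M := le_max_right _ _
  have hC' : ∀ x ∈ Icc (0:ℝ) 1, ‖f' x‖ ≤ M := fun x hx => (hC x hx).trans (le_max_left _ _)
  have hfb : ∀ x ∈ Icc (0:ℝ) 1, |f x| ≤ M * x := by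
    intro x hx
    have := (convex_Icc (0:ℝ) 1).norm_image_sub_le_of_norm_hasDerivWithin_le
      (fun y hy => (hd y hy).hasDerivWithinAt) hC'
      (left_mem_Icc.2 zero_le_one) hx
    simpa [h0, Real.norm_eq_abs, abs_of_nonneg hx.1] using this
  have hf'b : ∀ x ∈ Icc (0:ℝ) 1, |f' x| ≤ M := by
    intro x hx; simpa [Real.norm_eq_abs] using hC' x hx
  have hfc : ContinuousOn f (Icc (0:ℝ) 1) :=
    fun x hx => (hd x hx).continuousAt.continuousWithinAt
  -- Definitions
  set D : ℝ → ℝ := fun x => -((1 + x ^ 2) / x ^ 2) * (f x) ^ 2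
      + 2 * (1 - x ^ 2) * (f x) * (f' x) / x with hDdef
  set H : ℝ → ℝ := fun x => (1 - x ^ 2) * (f x) ^ 2 / x with hHdef
  have hH0 : H 0 = 0 := by simp [hHdef, h0]
  have hH1 : H 1 = 0 := by simp [hHdef]
  -- Continuity of H on [0,1]
  have hHcont : ContinuousOn H (Icc (0:ℝ) 1) := by
    intro x hx
    rcases eq_or_ne x 0 with rfl | hx0
    · -- continuity at 0 by squeeze
      have hb : ∀ y ∈ Icc (0:ℝ) 1, ‖H y‖ ≤ M ^ 2 * y := by
        intro y hy
        rcases eq_or_lt_of_le hy.1 with rfl | hy0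
        · simp [hHdef, h0, pow_two_nonneg, mul_nonneg hM0 hM0]
        · have hy1 : (0:ℝ) ≤ 1 - y ^ 2 := by nlinarith [hy.2]
          have hfy := hfb y hy
          have hfy2 : (f y) ^ 2 ≤ (M * y) ^ 2 := by
            have := mul_self_le_mul_self (abs_nonneg (f y)) hfy
            nlinarith [sq_abs (f y)]
          rw [Real.norm_eq_abs]
          have hHnn : (0:ℝ) ≤ (1 - y ^ 2) * (f y) ^ 2 / y := by positivity
          show |(1 - y ^ 2) * (f y) ^ 2 / y| ≤ M ^ 2 * y
          rw [abs_of_nonneg hHnn, div_le_iff₀ hy0]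
          nlinarith [sq_nonneg (f y), hy.2]
      have htz : Filter.Tendsto (fun y : ℝ => M ^ 2 * y) (nhdsWithin 0 (Icc (0:ℝ) 1)) (nhds 0) := by
        have : Filter.Tendsto (fun y : ℝ => M ^ 2 * y) (nhds 0) (nhds (M ^ 2 * 0)) :=
          (continuous_const.mul continuous_id).tendsto 0
        simpa using this.mono_left nhdsWithin_le_nhds
      have : Filter.Tendsto H (nhdsWithin 0 (Icc (0:ℝ) 1)) (nhds 0) :=
        squeeze_zero_norm' (eventually_nhdsWithin_of_forall hb) htz
      simpa [ContinuousWithinAt, hH0] using this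
    · exact (((continuousAt_const.sub (continuousAt_id.pow 2)).mul
        (((hd x hx).continuousAt).pow 2)).div continuousAt_id hx0).continuousWithinAt
  -- Derivative of H on (0,1)
  have hHderiv : ∀ x ∈ Ioo (0:ℝ) 1, HasDerivWithinAt H (D x) (Ioi x) x := by
    intro x hx
    have hxI : x ∈ Icc (0:ℝ) 1 := Ioo_subset_Icc_self hx
    have hx0 : x ≠ 0 := ne_of_gt hx.1
    have h1 : HasDerivAt (fun y : ℝ => 1 - y ^ 2) (-(2 * x)) x := by
      simpa using (hasDerivAt_pow 2 x).const_sub 1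
    have h2 : HasDerivAt (fun y => (f y) ^ 2) (2 * f x * f' x) x := by
      simpa [mul_comm, mul_assoc] using (hd x hxI).fun_pow 2
    have hnum := h1.mul h2
    have hdiv := hnum.div (hasDerivAt_id x) hx0
    have : HasDerivAt H (D x) x := by
      convert hdiv using 1
      show -((1 + x ^ 2) / x ^ 2) * (f x) ^ 2 + 2 * (1 - x ^ 2) * (f x) * (f' x) / x = _
      simp only [id, Pi.mul_apply]
      field_simp
      ring
      all_goals rfl
    exact this.hasDerivWithinAt
  -- Pointwise bound for D on (0,1]
  have hDbd : ∀ x ∈ Ioc (0:ℝ) 1, ‖D x‖ ≤ 4 * M ^ 2 := by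
    intro x hx
    obtain ⟨hx0, hx1⟩ := hx
    have hxI : x ∈ Icc (0:ℝ) 1 := ⟨le_of_lt hx0, hx1⟩
    have hfx := hfb x hxI
    have hf'x := hf'b x hxI
    have hx2 : (0:ℝ) ≤ 1 - x ^ 2 := by nlinarith
    have hfx2 : (f x) ^ 2 ≤ (M * x) ^ 2 := by
      have := mul_self_le_mul_self (abs_nonneg (f x)) hfx
      nlinarith [sq_abs (f x)]
    rw [Real.norm_eq_abs]
    have habs : |D x| ≤ |(-((1 + x ^ 2) / x ^ 2) * (f x) ^ 2)|
        + |(2 * (1 - x ^ 2) * (f x) * (f' x) / x)| := abs_add_le _ _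
    have e1 : |(-((1 + x ^ 2) / x ^ 2) * (f x) ^ 2)| ≤ 2 * M ^ 2 := by
      rw [abs_mul, abs_neg, abs_of_nonneg (by positivity : (0:ℝ) ≤ (1 + x ^ 2) / x ^ 2),
        abs_of_nonneg (sq_nonneg (f x))]
      rw [div_mul_eq_mul_div, div_le_iff₀ (by positivity : (0:ℝ) < x ^ 2)]
      nlinarith [sq_nonneg x, sq_nonneg (f x)]
    have e2 : |(2 * (1 - x ^ 2) * (f x) * (f' x) / x)| ≤ 2 * M ^ 2 := by
      rw [abs_div, abs_of_pos hx0, div_le_iff₀ hx0]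
      have : |2 * (1 - x ^ 2) * f x * f' x| = 2 * (1 - x ^ 2) * |f x| * |f' x| := by
        rw [abs_mul, abs_mul, abs_of_nonneg (by linarith : (0:ℝ) ≤ 2 * (1 - x ^ 2))]
      rw [this]
      have hff' : |f x| * |f' x| ≤ (M * x) * M :=
        mul_le_mul hfx hf'x (abs_nonneg _) (by positivity)
      nlinarith [abs_nonneg (f x), abs_nonneg (f' x)]
    calc |D x| ≤ _ + _ := habs
      _ ≤ 2 * M ^ 2 + 2 * M ^ 2 := add_le_add e1 e2
      _ = 4 * M ^ 2 := by ring
  -- Interval integrability of D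
  have hDint : IntervalIntegrable D volume 0 1 := by
    rw [intervalIntegrable_iff_integrableOn_Ioc_of_le zero_le_one]
    have hDcont : ContinuousOn D (Ioc (0:ℝ) 1) := by
      have hf'c : ContinuousOn f' (Ioc (0:ℝ) 1) := hc.mono Ioc_subset_Icc_self
      have hfc' : ContinuousOn f (Ioc (0:ℝ) 1) := hfc.mono Ioc_subset_Icc_self
      apply ContinuousOn.add
      · exact (((continuousOn_const.add (continuousOn_id.pow 2)).div
          (continuousOn_id.pow 2) (fun x hx => pow_ne_zero 2 (ne_of_gt hx.1))).neg).mul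
          (hfc'.pow 2)
      · exact (((continuousOn_const.mul (continuousOn_const.sub (continuousOn_id.pow 2))).mul
          hfc').mul hf'c).div continuousOn_id (fun x hx => ne_of_gt hx.1)
    refine Integrable.mono' (g := fun _ => 4 * M ^ 2) ?_
      (hDcont.aestronglyMeasurable measurableSet_Ioc) ?_
    · exact integrableOn_const measure_Ioc_lt_top.ne
    · exact (ae_restrict_iff' measurableSet_Ioc).2 (Filter.Eventually.of_forall hDbd)
  -- FTC for D
  have hFTC : ∫ x in (0:ℝ)..1, D x = 0 := by
    rw [integral_eq_sub_of_hasDeriv_right_of_le zero_le_one hHcont hHderiv hDint, hH1, hH0,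
      sub_zero]
  -- The combined integrand is nonneg after subtracting D
  have hQ : ∀ x ∈ Icc (0:ℝ) 1,
      0 ≤ ((1 - x ^ 2) ^ 2 * (f' x) ^ 2 - (f x) ^ 2) - D x := by
    intro x hx
    rcases eq_or_lt_of_le hx.1 with rfl | hx0
    · show (0:ℝ) ≤ ((1 - 0 ^ 2) ^ 2 * (f' 0) ^ 2 - (f 0) ^ 2) -
        (-((1 + 0 ^ 2) / 0 ^ 2) * (f 0) ^ 2 + 2 * (1 - 0 ^ 2) * (f 0) * (f' 0) / 0)
      simp [h0]
      positivity
    rcases eq_or_lt_of_le hx.2 with hx1 | hx1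
    · subst hx1
      show (0:ℝ) ≤ ((1 - 1 ^ 2) ^ 2 * (f' 1) ^ 2 - (f 1) ^ 2) -
        (-((1 + 1 ^ 2) / 1 ^ 2) * (f 1) ^ 2 + 2 * (1 - 1 ^ 2) * (f 1) * (f' 1) / 1)
      nlinarith [sq_nonneg (f 1)]
    · have hx0' : x ≠ 0 := ne_of_gt hx0
      have hx2 : (1:ℝ) - x ^ 2 ≠ 0 := by nlinarith
      have key : ((1 - x ^ 2) ^ 2 * (f' x) ^ 2 - (f x) ^ 2) - D x
          = (1 - x ^ 2) ^ 2 * (f' x - f x / (x * (1 - x ^ 2))) ^ 2 := by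
        show ((1 - x ^ 2) ^ 2 * (f' x) ^ 2 - (f x) ^ 2) -
          (-((1 + x ^ 2) / x ^ 2) * (f x) ^ 2 + 2 * (1 - x ^ 2) * (f x) * (f' x) / x) = _
        field_simp
        ring
      rw [key]
      positivity
  -- Integrabilities of the pieces
  have hWint : IntervalIntegrable (fun x => (1 - x ^ 2) ^ 2 * (f' x) ^ 2) volume 0 1 := by
    apply ContinuousOn.intervalIntegrable
    rw [uIcc_of_le zero_le_one]
    exact ((continuousOn_const.sub (continuousOn_id.pow 2)).pow 2).mul (hc.pow 2)
  have hFint : IntervalIntegrable (fun x => (f x) ^ 2) volume 0 1 := by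
    apply ContinuousOn.intervalIntegrable
    rw [uIcc_of_le zero_le_one]
    exact hfc.pow 2
  have hGint : IntervalIntegrable
      (fun x => (1 - x ^ 2) ^ 2 * (f' x) ^ 2 - (f x) ^ 2) volume 0 1 := hWint.sub hFint
  have key : 0 ≤ ∫ x in (0:ℝ)..1, ((1 - x ^ 2) ^ 2 * (f' x) ^ 2 - (f x) ^ 2) := by
    have split : ∫ x in (0:ℝ)..1, ((1 - x ^ 2) ^ 2 * (f' x) ^ 2 - (f x) ^ 2)
        = (∫ x in (0:ℝ)..1, (((1 - x ^ 2) ^ 2 * (f' x) ^ 2 - (f x) ^ 2) - D x))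
          + ∫ x in (0:ℝ)..1, D x := by
      rw [integral_sub hGint hDint]
      ring
    rw [split, hFTC, add_zero]
    exact intervalIntegral.integral_nonneg zero_le_one hQ
  rw [ge_iff_le, ← sub_nonneg, ← integral_sub hWint hFint]
  exact key
end

section
/- For every continuously differentiable function f on [0,1] with f(0)=0 and every p ∈ [0,1], ∫₀¹ (1-x²)^{2p} (f'(x))² dx ≥ ∫₀¹ (2 + ((1-x²)/x²)(1 - (1-x²)^{1-2p})) f(x)² dx. -/
open MeasureTheory intervalIntegral Set Filter Topology

set_option maxHeartbeats 1000000

theorem stmt_3 (f f' : ℝ → ℝ)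
    (hd : ∀ x ∈ Set.Icc (0:ℝ) 1, HasDerivAt f (f' x) x)
    (hc : ContinuousOn f' (Set.Icc (0:ℝ) 1))
    (h0 : f 0 = 0) (p : ℝ) (hp : p ∈ Set.Icc (0:ℝ) 1) :
    ∫ x in (0:ℝ)..1, (1 - x ^ 2) ^ (2 * p) * (f' x) ^ 2 ≥
      ∫ x in (0:ℝ)..1,
        (2 + ((1 - x ^ 2) / x ^ 2) * (1 - (1 - x ^ 2) ^ (1 - 2 * p))) * (f x) ^ 2 := by
  obtain ⟨hp0, hp1⟩ := hp
  set A : ℝ → ℝ := fun x => (1 - x ^ 2) ^ (2 * p) * (f' x) ^ 2 with hA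
  set B : ℝ → ℝ := fun x =>
    (2 + ((1 - x ^ 2) / x ^ 2) * (1 - (1 - x ^ 2) ^ (1 - 2 * p))) * (f x) ^ 2 with hB
  set D : ℝ → ℝ := fun x => (1 - x ^ 2) ^ (2 - 2 * p) / x ^ 2 * (f x) ^ 2 with hD
  set E : ℝ → ℝ := fun x => (1 - x ^ 2) / x * (2 * f x * f' x) with hE
  set G : ℝ → ℝ := fun x => (1 / x ^ 2 + 1) * (f x) ^ 2 with hG
  have huIcc : uIcc (0:ℝ) 1 = Icc 0 1 := uIcc_of_le zero_le_one
  -- continuity of f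
  have hfc : ContinuousOn f (Icc 0 1) := fun x hx => (hd x hx).continuousAt.continuousWithinAt
  -- bound M on f'
  obtain ⟨M0, hM0⟩ := (isCompact_Icc).exists_bound_of_continuousOn hc
  set M := max M0 0 with hM
  have hMnn : (0:ℝ) ≤ M := le_max_right _ _
  have hM' : ∀ x ∈ Icc (0:ℝ) 1, |f' x| ≤ M := fun x hx => (hM0 x hx).trans (le_max_left _ _)
  -- |f x| ≤ M x
  have hfleq : ∀ x ∈ Icc (0:ℝ) 1, |f x| ≤ M * x := by
    intro x hx
    have hsub : uIcc 0 x ⊆ Icc (0:ℝ) 1 := by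
      rw [uIcc_of_le hx.1]; exact Icc_subset_Icc le_rfl hx.2
    have hint : IntervalIntegrable f' volume 0 x := (hc.mono hsub).intervalIntegrable
    have hfeq : ∫ t in (0:ℝ)..x, f' t = f x - f 0 :=
      integral_eq_sub_of_hasDerivAt (fun t ht => hd t (hsub ht)) hint
    have hbnd : ∀ t ∈ Set.uIoc (0:ℝ) x, ‖f' t‖ ≤ M := by
      intro t ht
      have : t ∈ Icc (0:ℝ) 1 := by
        have : Set.uIoc (0:ℝ) x ⊆ uIcc 0 x := Ioc_subset_Icc_self
        exact hsub (this ht)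
      simpa using hM' t this
    have := intervalIntegral.norm_integral_le_of_norm_le_const hbnd
    rw [hfeq, h0, sub_zero] at this
    simpa [abs_of_nonneg hx.1] using this
  have hf2 : ∀ x ∈ Icc (0:ℝ) 1, f x ^ 2 ≤ M ^ 2 * x ^ 2 := by
    intro x hx
    have h := hfleq x hx
    have h2 := abs_nonneg (f x)
    nlinarith [sq_abs (f x)]
  -- rpow lemmas
  have hbase : ∀ x ∈ Icc (0:ℝ) 1, (0:ℝ) ≤ 1 - x ^ 2 := by
    intro x hx; nlinarith [hx.1, hx.2]
  have lem1 : ∀ x ∈ Icc (0:ℝ) 1, ((1 - x ^ 2) ^ p) ^ 2 = (1 - x ^ 2) ^ (2 * p) := by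
    intro x hx
    rw [← Real.rpow_natCast ((1 - x ^ 2) ^ p) 2, ← Real.rpow_mul (hbase x hx)]
    norm_num [mul_comm]
  have lem3 : ∀ x ∈ Icc (0:ℝ) 1, ((1 - x ^ 2) ^ (1 - p)) ^ 2 = (1 - x ^ 2) ^ (2 - 2 * p) := by
    intro x hx
    rw [← Real.rpow_natCast ((1 - x ^ 2) ^ (1 - p)) 2, ← Real.rpow_mul (hbase x hx)]
    ring_nf
  have lem2 : ∀ x ∈ Icc (0:ℝ) 1, (1 - x ^ 2) ^ p * (1 - x ^ 2) ^ (1 - p) = 1 - x ^ 2 := by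
    intro x hx
    rcases (hbase x hx).lt_or_eq with hpos | hzero
    · rw [← Real.rpow_add hpos]; norm_num
    · rw [← hzero]
      rcases eq_or_ne p 0 with rfl | hne
      · norm_num
      · rw [Real.zero_rpow hne]; ring
  have lem4 : ∀ x ∈ Ioo (0:ℝ) 1, (1 - x ^ 2) * (1 - x ^ 2) ^ (1 - 2 * p)
      = (1 - x ^ 2) ^ (2 - 2 * p) := by
    intro x hx
    have hpos : (0:ℝ) < 1 - x ^ 2 := by nlinarith [hx.1, hx.2]
    nth_rewrite 1 [← Real.rpow_one (1 - x ^ 2)]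
    rw [← Real.rpow_add hpos]
    ring_nf
  -- continuity / integrability of A
  have hAc : ContinuousOn A (Icc 0 1) := by
    refine ContinuousOn.mul ?_ (ContinuousOn.pow hc 2)
    exact ((Real.continuous_rpow_const (by linarith : (0:ℝ) ≤ 2 * p)).comp
      (continuous_const.sub (continuous_pow 2))).continuousOn
  have hAint : IntervalIntegrable A volume 0 1 := by
    apply ContinuousOn.intervalIntegrable; rwa [huIcc]
  -- integrability of B
  have hBc : ContinuousOn B (Ioo 0 1) := by
    refine ContinuousOn.mul (ContinuousOn.add continuousOn_const ?_)
      ((hfc.mono Ioo_subset_Icc_self).pow 2)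
    refine ContinuousOn.mul ?_ (continuousOn_const.sub ?_)
    · exact ContinuousOn.div (continuous_const.sub (continuous_pow 2)).continuousOn
        (continuous_pow 2).continuousOn (fun x hx => pow_ne_zero 2 (ne_of_gt hx.1))
    · intro x hx
      have hpos : (0:ℝ) < 1 - x ^ 2 := by nlinarith [hx.1, hx.2]
      exact ((continuousAt_const.sub (continuousAt_pow x 2)).rpow_const
        (Or.inl hpos.ne')).continuousWithinAt
  have hBbound : ∀ x ∈ Ioo (0:ℝ) 1, |B x| ≤ 4 * M ^ 2 := by
    intro x hx
    have hx' : x ∈ Icc (0:ℝ) 1 := Ioo_subset_Icc_self hx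
    have hxp : (0:ℝ) < x := hx.1
    set c := (1 - x ^ 2) ^ (1 - 2 * p) with hcdef
    have hcnn : 0 ≤ c := Real.rpow_nonneg (hbase x hx') _
    have hcle : (1 - x ^ 2) * c ≤ 1 := by
      rw [lem4 x hx]
      exact Real.rpow_le_one (hbase x hx') (by nlinarith [hxp]) (by linarith)
    have hfx2 := hf2 x hx'
    have hfxnn : (0:ℝ) ≤ f x ^ 2 := sq_nonneg _
    have hfM : f x ^ 2 ≤ M ^ 2 := by nlinarith [hfx2, mul_nonneg (sq_nonneg M) (hbase x hx')]
    set g := f x ^ 2 / x ^ 2 with hgdef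
    have hgnn : 0 ≤ g := by positivity
    have hgle : g ≤ M ^ 2 := by
      rw [hgdef, div_le_iff₀ (by positivity)]; linarith [hfx2]
    have hBeq : B x = 2 * f x ^ 2 + (1 - x ^ 2) * g - (1 - x ^ 2) * c * g := by
      rw [hB, hgdef]; field_simp; ring
    have hx2le : (1 : ℝ) - x ^ 2 ≤ 1 := by nlinarith [sq_nonneg x]
    have haux1 : (1 - x ^ 2) * c * g ≤ g := by
      calc (1 - x ^ 2) * c * g ≤ 1 * g :=
            mul_le_mul_of_nonneg_right hcle hgnn
        _ = g := one_mul g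
    have haux2 : 0 ≤ (1 - x ^ 2) * g := mul_nonneg (hbase x hx') hgnn
    have haux3 : (1 - x ^ 2) * g ≤ g := by
      calc (1 - x ^ 2) * g ≤ 1 * g := mul_le_mul_of_nonneg_right hx2le hgnn
        _ = g := one_mul g
    have haux4 : 0 ≤ (1 - x ^ 2) * c * g := mul_nonneg (mul_nonneg (hbase x hx') hcnn) hgnn
    rw [abs_le]
    constructor
    · rw [hBeq]; nlinarith [sq_nonneg M]
    · rw [hBeq]; nlinarith [sq_nonneg M]
  have hBint : IntervalIntegrable B volume 0 1 := by
    rw [intervalIntegrable_iff_integrableOn_Ioo_of_le zero_le_one]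
    have hmeas : AEStronglyMeasurable B (volume.restrict (Ioo (0:ℝ) 1)) :=
      hBc.aestronglyMeasurable measurableSet_Ioo
    refine Integrable.mono' (g := fun _ => 4 * M ^ 2) ?_ hmeas ?_
    · exact integrableOn_const measure_Ioo_lt_top.ne
    · filter_upwards [ae_restrict_mem measurableSet_Ioo] with x hx
      simpa using hBbound x hx
  -- the key inequality on [a,1]
  have key : ∀ a ∈ Ioc (0:ℝ) 1,
      ∫ x in a..1, B x ≤ (∫ x in a..1, A x) + (1 - a ^ 2) / a * f a ^ 2 := by
    intro a ha
    have ha0 : (0:ℝ) < a := ha.1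
    have ha1 : a ≤ 1 := ha.2
    have hsub : Icc a 1 ⊆ Icc (0:ℝ) 1 := Icc_subset_Icc ha0.le le_rfl
    have huIcc' : uIcc a 1 = Icc a 1 := uIcc_of_le ha1
    have hxpos : ∀ x ∈ Icc a 1, (0:ℝ) < x := fun x hx => lt_of_lt_of_le ha0 hx.1
    -- continuities on [a,1]
    have hfc' : ContinuousOn f (Icc a 1) := hfc.mono hsub
    have hc' : ContinuousOn f' (Icc a 1) := hc.mono hsub
    have hEc : ContinuousOn E (Icc a 1) := by
      refine ContinuousOn.mul (ContinuousOn.div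
        (continuous_const.sub (continuous_pow 2)).continuousOn continuous_id.continuousOn
        (fun x hx => (hxpos x hx).ne')) ?_
      exact ((continuousOn_const.mul hfc').mul hc')
    have hDc : ContinuousOn D (Icc a 1) := by
      refine ContinuousOn.mul (ContinuousOn.div ?_ (continuous_pow 2).continuousOn
        (fun x hx => pow_ne_zero 2 (hxpos x hx).ne')) (hfc'.pow 2)
      exact ((Real.continuous_rpow_const (by linarith : (0:ℝ) ≤ 2 - 2 * p)).comp
        (continuous_const.sub (continuous_pow 2))).continuousOn
    have hGc : ContinuousOn G (Icc a 1) := by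
      refine ContinuousOn.mul (ContinuousOn.add (ContinuousOn.div continuousOn_const
        (continuous_pow 2).continuousOn (fun x hx => pow_ne_zero 2 (hxpos x hx).ne'))
        continuousOn_const) (hfc'.pow 2)
    have hAint' : IntervalIntegrable A volume a 1 := by
      apply ContinuousOn.intervalIntegrable; rw [huIcc']; exact hAc.mono hsub
    have hEint : IntervalIntegrable E volume a 1 := by
      apply ContinuousOn.intervalIntegrable; rw [huIcc']; exact hEc
    have hDint : IntervalIntegrable D volume a 1 := by
      apply ContinuousOn.intervalIntegrable; rw [huIcc']; exact hDc
    have hGint : IntervalIntegrable G volume a 1 := by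
      apply ContinuousOn.intervalIntegrable; rw [huIcc']; exact hGc
    -- integration by parts
    have hderiv : ∀ x ∈ Icc a 1, HasDerivAt (fun x => (1 - x ^ 2) / x * f x ^ 2)
        ((-1 / x ^ 2 - 1) * f x ^ 2 + E x) x := by
      intro x hx
      have hxne : x ≠ 0 := (hxpos x hx).ne'
      have h1 : HasDerivAt (fun x : ℝ => (1 - x ^ 2) / x) (-1 / x ^ 2 - 1) x := by
        have hnum : HasDerivAt (fun x : ℝ => 1 - x ^ 2) (-(2 * x)) x := by
          simpa using ((hasDerivAt_pow 2 x).const_sub 1)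
        have hdiv := hnum.fun_div (hasDerivAt_id' x) hxne
        refine hdiv.congr_deriv ?_
        field_simp
        try ring
      have h2 : HasDerivAt (fun x => f x ^ 2) (2 * f x * f' x) x := by
        simpa [mul_comm, mul_assoc] using (hd x (hsub hx)).fun_pow 2
      have hmul := h1.fun_mul h2
      convert hmul using 1
      try (simp only [hE]; ring)
    have hnegint : IntervalIntegrable (fun x => (-1 / x ^ 2 - 1) * f x ^ 2) volume a 1 := by
      apply ContinuousOn.intervalIntegrable
      rw [huIcc']
      exact ContinuousOn.mul (ContinuousOn.sub (ContinuousOn.div continuousOn_const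
        (continuous_pow 2).continuousOn (fun x hx => pow_ne_zero 2 (hxpos x hx).ne'))
        continuousOn_const) (hfc'.pow 2)
    have hibp := integral_eq_sub_of_hasDerivAt
      (f := fun x => (1 - x ^ 2) / x * f x ^ 2)
      (f' := fun x => (-1 / x ^ 2 - 1) * f x ^ 2 + E x)
      (fun x hx => hderiv x (by rwa [huIcc'] at hx)) (hnegint.add hEint)
    have hnegG : ∀ x, (-1 / x ^ 2 - 1) * f x ^ 2 = -G x := by
      intro x; simp only [hG]; ring
    have hEval : ∫ x in a..1, E x
        = (∫ x in a..1, G x) - (1 - a ^ 2) / a * f a ^ 2 := by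
      have hsplit : ∫ x in a..1, ((-1 / x ^ 2 - 1) * f x ^ 2 + E x)
          = (∫ x in a..1, (-1 / x ^ 2 - 1) * f x ^ 2) + ∫ x in a..1, E x :=
        integral_add hnegint hEint
      have hneg : ∫ x in a..1, (-1 / x ^ 2 - 1) * f x ^ 2 = - ∫ x in a..1, G x := by
        rw [← intervalIntegral.integral_neg]
        exact integral_congr (fun x _ => hnegG x)
      rw [hsplit, hneg] at hibp
      norm_num at hibp
      linarith [hibp]
    -- nonnegativity of the square
    have hsq : 0 ≤ ∫ x in a..1, (A x - E x + D x) := by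
      apply intervalIntegral.integral_nonneg ha1
      intro x hx
      have hx0 : x ∈ Icc (0:ℝ) 1 := hsub hx
      have hxp : (0:ℝ) < x := hxpos x hx
      have heq : A x - E x + D x
          = ((1 - x ^ 2) ^ p * f' x - (1 - x ^ 2) ^ (1 - p) / x * f x) ^ 2 := by
        have e1 := lem1 x hx0
        have e2 := lem2 x hx0
        have e3 := lem3 x hx0
        have hxne : x ≠ 0 := hxp.ne'
        simp only [hA, hE, hD]
        set s := (1 - x ^ 2) ^ p with hs
        set t := (1 - x ^ 2) ^ (1 - p) with ht
        rw [← e1, ← e3, ← e2]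
        field_simp
        ring
      rw [heq]
      positivity
    have hADE : ∫ x in a..1, (A x - E x + D x)
        = (∫ x in a..1, A x) - (∫ x in a..1, E x) + ∫ x in a..1, D x := by
      rw [integral_add (hAint'.sub hEint) hDint, integral_sub hAint' hEint]
    -- B = G - D a.e.
    have hBGD : ∫ x in a..1, B x = (∫ x in a..1, G x) - ∫ x in a..1, D x := by
      rw [← integral_sub hGint hDint]
      apply intervalIntegral.integral_congr_ae
      have hae : ∀ᵐ x : ℝ, x ≠ 1 := by
        refine (MeasureTheory.measure_eq_zero_iff_ae_notMem (s := {(1:ℝ)})).mp (by simp) |>.mono ?_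
        intro x hx; simpa using hx
      filter_upwards [hae] with x hxne hxI
      rw [uIoc_of_le ha1] at hxI
      have hxoo : x ∈ Ioo (0:ℝ) 1 := ⟨lt_trans ha0 hxI.1, lt_of_le_of_ne hxI.2 hxne⟩
      have e4 := lem4 x hxoo
      have hxne0 : x ≠ 0 := (lt_trans ha0 hxI.1).ne'
      simp only [hB, hG, hD]
      rw [← e4]
      field_simp
      ring
    rw [hBGD]
    rw [hADE] at hsq
    rw [hEval] at hsq
    linarith
  -- limits as a → 0⁺
  have hA_IcInt : IntegrableOn A (uIcc 0 1) volume := by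
    rw [huIcc, ← intervalIntegrable_iff_integrableOn_Icc_of_le zero_le_one]; exact hAint
  have hB_IcInt : IntegrableOn B (uIcc 0 1) volume := by
    rw [huIcc, ← intervalIntegrable_iff_integrableOn_Icc_of_le zero_le_one]; exact hBint
  have hnhds : 𝓝[Ioc (0:ℝ) 1] 0 = 𝓝[>] (0:ℝ) := nhdsWithin_Ioc_eq_nhdsGT zero_lt_one
  have hmono : 𝓝[>] (0:ℝ) ≤ 𝓝[Icc (0:ℝ) 1] 0 := by
    rw [← hnhds]; exact nhdsWithin_mono _ Ioc_subset_Icc_self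
  have tendA : Tendsto (fun a => ∫ x in a..1, A x) (𝓝[>] (0:ℝ)) (𝓝 (∫ x in (0:ℝ)..1, A x)) := by
    have := (intervalIntegral.continuousOn_primitive_interval_left hA_IcInt) 0 (by rw [huIcc]; exact ⟨le_rfl, zero_le_one⟩)
    rw [huIcc] at this
    exact this.tendsto.mono_left hmono
  have tendB : Tendsto (fun a => ∫ x in a..1, B x) (𝓝[>] (0:ℝ)) (𝓝 (∫ x in (0:ℝ)..1, B x)) := by
    have := (intervalIntegral.continuousOn_primitive_interval_left hB_IcInt) 0 (by rw [huIcc]; exact ⟨le_rfl, zero_le_one⟩)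
    rw [huIcc] at this
    exact this.tendsto.mono_left hmono
  have hmem : Ioc (0:ℝ) 1 ∈ 𝓝[>] (0:ℝ) := Ioc_mem_nhdsGT_of_mem ⟨le_rfl, zero_lt_one⟩
  have tendbdry : Tendsto (fun a => (1 - a ^ 2) / a * f a ^ 2) (𝓝[>] (0:ℝ)) (𝓝 0) := by
    have hub : ∀ᶠ a in 𝓝[>] (0:ℝ), (1 - a ^ 2) / a * f a ^ 2 ≤ M ^ 2 * a := by
      filter_upwards [hmem] with a ha
      have ha0 : (0:ℝ) < a := ha.1
      have hfa := hf2 a (Ioc_subset_Icc_self ha)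
      rw [div_mul_eq_mul_div, div_le_iff₀ ha0]
      nlinarith [sq_nonneg (f a), ha.2]
    have hlb : ∀ᶠ a in 𝓝[>] (0:ℝ), 0 ≤ (1 - a ^ 2) / a * f a ^ 2 := by
      filter_upwards [hmem] with a ha
      have ha0 : (0:ℝ) < a := ha.1
      have : (0:ℝ) ≤ 1 - a ^ 2 := by nlinarith [ha.2]
      positivity
    have htop : Tendsto (fun a : ℝ => M ^ 2 * a) (𝓝[>] (0:ℝ)) (𝓝 0) := by
      have : Tendsto (fun a : ℝ => M ^ 2 * a) (𝓝 0) (𝓝 (M ^ 2 * 0)) :=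
        (continuous_const.mul continuous_id).tendsto 0
      rw [mul_zero] at this
      exact this.mono_left nhdsWithin_le_nhds
    exact squeeze_zero' hlb hub htop
  have hev : ∀ᶠ a in 𝓝[>] (0:ℝ),
      (fun a => ∫ x in a..1, B x) a ≤ (fun a => (∫ x in a..1, A x) + (1 - a ^ 2) / a * f a ^ 2) a := by
    filter_upwards [hmem] with a ha
    exact key a ha
  have hfin : (∫ x in (0:ℝ)..1, B x) ≤ (∫ x in (0:ℝ)..1, A x) + 0 :=
    le_of_tendsto_of_tendsto tendB (tendA.add tendbdry) hev
  rw [add_zero] at hfin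
  exact hfin
end

section
/- For every continuously differentiable function f on [-1,1] with ∫₋₁¹ f(x) dx = 0, the inequality ∫₋₁¹ (1-x²)² (f'(x))² dx ≥ ∫₋₁¹ f(x)² dx holds. -/
open Set MeasureTheory intervalIntegral Filter

theorem stmt_4 (f f' : ℝ → ℝ)
    (hd : ∀ x ∈ Set.Icc (-1:ℝ) 1, HasDerivAt f (f' x) x)
    (hc : ContinuousOn f' (Set.Icc (-1:ℝ) 1))
    (havg : ∫ x in (-1:ℝ)..1, f x = 0) :
    ∫ x in (-1:ℝ)..1, (1 - x ^ 2) ^ 2 * (f' x) ^ 2 ≥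
      ∫ x in (-1:ℝ)..1, (f x) ^ 2 := by
  have hcf : ContinuousOn f (Icc (-1:ℝ) 1) :=
    fun x hx => (hd x hx).continuousAt.continuousWithinAt
  obtain ⟨M, hM⟩ : ∃ M, ∀ x ∈ Icc (-1:ℝ) 1, |f x| ≤ M := by
    obtain ⟨M, hM⟩ := isCompact_Icc.exists_bound_of_continuousOn hcf
    exact ⟨M, fun x hx => by simpa using hM x hx⟩
  have hM0 : 0 ≤ M := le_trans (abs_nonneg _) (hM 0 (by norm_num))
  set F : ℝ → ℝ := fun x => ∫ t in (-1:ℝ)..x, f t with hFdef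
  have huIcc : uIcc (-1:ℝ) 1 = Icc (-1:ℝ) 1 := uIcc_of_le (by norm_num)
  have hfint : ∀ x ∈ Icc (-1:ℝ) 1, ∀ y ∈ Icc (-1:ℝ) 1,
      IntervalIntegrable f volume x y := by
    intro x hx y hy
    exact (hcf.mono (uIcc_subset_Icc hx hy)).intervalIntegrable
  have hF1 : F 1 = 0 := havg
  have hFm1 : F (-1) = 0 := integral_same
  -- Lipschitz-type bound
  have hLip : ∀ x ∈ Icc (-1:ℝ) 1, ∀ y ∈ Icc (-1:ℝ) 1, |F y - F x| ≤ M * |y - x| := by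
    intro x hx y hy
    have heq : F y - F x = ∫ t in x..y, f t := by
      simp only [hFdef]
      exact (integral_interval_sub_left (hfint (-1) (by norm_num) y hy)
        (hfint (-1) (by norm_num) x hx))
    rw [heq]
    rw [← Real.norm_eq_abs]
    apply intervalIntegral.norm_integral_le_of_norm_le_const
    intro t ht
    have htm : t ∈ Icc (-1:ℝ) 1 := (uIcc_subset_Icc hx hy) (uIoc_subset_uIcc ht)
    rw [Real.norm_eq_abs]
    exact hM t htm
  have hFle1 : ∀ x ∈ Icc (-1:ℝ) 1, |F x| ≤ M * (1 - x) := by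
    intro x hx
    have := hLip 1 (by norm_num) x hx
    rw [hF1] at this
    simpa [abs_of_nonpos (by linarith [hx.2] : x - 1 ≤ 0)] using this
  have hFlem1 : ∀ x ∈ Icc (-1:ℝ) 1, |F x| ≤ M * (x + 1) := by
    intro x hx
    have := hLip (-1) (by norm_num) x hx
    rw [hFm1] at this
    simpa [abs_of_nonneg (by linarith [hx.1] : (0:ℝ) ≤ x + 1)] using this
  have hFcont : ContinuousOn F (Icc (-1:ℝ) 1) := by
    have := intervalIntegral.continuousOn_primitive_interval
      (f := f) (μ := volume) (a := (-1:ℝ)) (b := 1)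
      (by rw [huIcc]; exact hcf.integrableOn_compact isCompact_Icc)
    rwa [huIcc] at this
  have hFd : ∀ x ∈ Ioo (-1:ℝ) 1, HasDerivAt F (f x) x := by
    intro x hx
    exact intervalIntegral.integral_hasDerivAt_right
      (hfint (-1) (by norm_num) x (Ioo_subset_Icc_self hx))
      ((hcf.mono Ioo_subset_Icc_self).stronglyMeasurableAtFilter isOpen_Ioo x hx)
      (hd x (Ioo_subset_Icc_self hx)).continuousAt
  have hIcc : ∀ g : ℝ → ℝ, ContinuousOn g (Icc (-1:ℝ) 1) →
      IntervalIntegrable g volume (-1) 1 := fun g hg => (huIcc ▸ hg).intervalIntegrable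
  -- pointwise bounds
  have hA : ∀ x ∈ Ioo (-1:ℝ) 1, |F x / (1 - x ^ 2)| ≤ M := by
    intro x hx
    have hden : (0:ℝ) < 1 - x ^ 2 := by nlinarith [hx.1, hx.2]
    rw [abs_div, abs_of_pos hden, div_le_iff₀ hden]
    rcases le_or_gt 0 x with h0 | h0
    · have h1 := hFle1 x (Ioo_subset_Icc_self hx)
      nlinarith [hx.2, abs_nonneg (F x)]
    · have h1 := hFlem1 x (Ioo_subset_Icc_self hx)
      nlinarith [hx.1, abs_nonneg (F x)]
  have hUF : ∀ x ∈ Ioo (-1:ℝ) 1, |x / (1 - x ^ 2) * F x| ≤ M := by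
    intro x hx
    have h1 : x / (1 - x ^ 2) * F x = x * (F x / (1 - x ^ 2)) := by ring
    rw [h1, abs_mul]
    have h2 : |x| ≤ 1 := abs_le.mpr ⟨hx.1.le, hx.2.le⟩
    nlinarith [hA x hx, abs_nonneg x, abs_nonneg (F x / (1 - x ^ 2))]
  -- integrabilities
  have hf2int : IntervalIntegrable (fun x => f x ^ 2) volume (-1) 1 :=
    hIcc _ (hcf.pow 2)
  have hFf'int : IntervalIntegrable (fun x => F x * f' x) volume (-1) 1 :=
    hIcc _ (hFcont.mul hc)
  have hwint : IntervalIntegrable (fun x => (1 - x ^ 2) ^ 2 * f' x ^ 2) volume (-1) 1 :=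
    hIcc _ (((continuous_const.sub (continuous_pow 2)).pow 2).continuousOn.mul (hc.pow 2))
  have hne : ∀ x ∈ Ioo (-1:ℝ) 1, (1:ℝ) - x ^ 2 ≠ 0 := by
    intro x hx; nlinarith [hx.1, hx.2]
  have hbdd_int : ∀ (g : ℝ → ℝ), ContinuousOn g (Ioo (-1:ℝ) 1) →
      ∀ C : ℝ, (∀ x ∈ Ioo (-1:ℝ) 1, |g x| ≤ C) → IntervalIntegrable g volume (-1) 1 := by
    intro g hg C hb
    rw [intervalIntegrable_iff_integrableOn_Ioc_of_le (by norm_num),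
      integrableOn_Ioc_iff_integrableOn_Ioo]
    apply Integrable.mono' (g := fun _ => C)
    · exact integrable_const _
    · exact hg.aestronglyMeasurable measurableSet_Ioo
    · rw [ae_restrict_iff' measurableSet_Ioo]
      filter_upwards with x hx
      rw [Real.norm_eq_abs]
      exact hb x hx
  have hg3int : IntervalIntegrable (fun x => (F x / (1 - x ^ 2)) ^ 2) volume (-1) 1 := by
    apply hbdd_int _ ?_ (M ^ 2)
    · intro x hx
      rw [abs_pow]
      exact pow_le_pow_left₀ (abs_nonneg _) (hA x hx) 2
    exact ((hFcont.mono Ioo_subset_Icc_self).div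
        (continuous_const.sub (continuous_pow 2)).continuousOn hne).pow 2
  have hg1int : IntervalIntegrable (fun x => (f x + x / (1 - x ^ 2) * F x) ^ 2)
      volume (-1) 1 := by
    apply hbdd_int _ ?_ ((M + M) ^ 2)
    · intro x hx
      rw [abs_pow]
      apply pow_le_pow_left₀ (abs_nonneg _) _ 2
      calc |f x + x / (1 - x ^ 2) * F x| ≤ |f x| + |x / (1 - x ^ 2) * F x| := abs_add_le _ _
        _ ≤ M + M := add_le_add (hM x (Ioo_subset_Icc_self hx)) (hUF x hx)
    exact ((hcf.mono Ioo_subset_Icc_self).add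
        ((continuous_id.continuousOn.div
          (continuous_const.sub (continuous_pow 2)).continuousOn hne).mul
          (hFcont.mono Ioo_subset_Icc_self))).pow 2
  -- Fact 1 : ∫ (f^2 + F f') = 0
  have fact1 : ∫ x in (-1:ℝ)..1, (f x ^ 2 + F x * f' x) = 0 := by
    have h := intervalIntegral.integral_eq_sub_of_hasDeriv_right_of_le
      (f := fun x => F x * f x) (f' := fun x => f x ^ 2 + F x * f' x)
      (by norm_num : (-1:ℝ) ≤ 1) (hFcont.mul hcf)
      (fun x hx => by
        have h1 := (hFd x hx).mul (hd x (Ioo_subset_Icc_self hx))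
        have h2 : f x * f x + F x * f' x = f x ^ 2 + F x * f' x := by ring
        exact (h2 ▸ h1).hasDerivWithinAt)
      (hIcc _ ((hcf.pow 2).add (hFcont.mul hc)))
    rw [h]
    simp [hF1, hFm1]
  -- the boundary function φ
  set φ : ℝ → ℝ := fun x => x * F x ^ 2 / (1 - x ^ 2) with hφdef
  have hφ1 : φ 1 = 0 := by simp only [hφdef]; rw [hF1]; norm_num
  have hφm1 : φ (-1) = 0 := by simp only [hφdef]; rw [hFm1]; norm_num
  have hφcont : ContinuousOn φ (Icc (-1:ℝ) 1) := by
    intro x hx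
    rcases eq_or_lt_of_le hx.2 with hx1 | hx1
    · -- x = 1
      rw [ContinuousWithinAt, hx1, hφ1]
      apply squeeze_zero_norm' (a := fun y => M ^ 2 * (1 - y))
      · have hev : ∀ᶠ y in nhdsWithin (1:ℝ) (Icc (-1:ℝ) 1), y ∈ Ioi (0:ℝ) :=
          eventually_nhdsWithin_of_eventually_nhds (isOpen_Ioi.eventually_mem (by norm_num))
        filter_upwards [hev, eventually_mem_nhdsWithin] with y hy0 hy
        rcases eq_or_lt_of_le hy.2 with h1 | h1
        · rw [h1, hφ1]
          norm_num
        · have hden : (0:ℝ) < 1 - y ^ 2 := by nlinarith [hy.1, mem_Ioi.mp hy0]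
          have hFy : |F y| ≤ M * (1 - y) := hFle1 y hy
          have hFy2 : |F y| ^ 2 ≤ (M * (1 - y)) ^ 2 := pow_le_pow_left₀ (abs_nonneg _) hFy 2
          have hay : |y| ≤ 1 := abs_le.mpr ⟨by linarith [hy.1], hy.2⟩
          simp only [Real.norm_eq_abs, hφdef]
          rw [abs_div, abs_of_pos hden, div_le_iff₀ hden, abs_mul, abs_pow]
          nlinarith [abs_nonneg y, abs_nonneg (F y), mem_Ioi.mp hy0]
      · have hcg : Continuous (fun y : ℝ => M ^ 2 * (1 - y)) := continuous_const.mul (continuous_const.sub continuous_id)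
        have h0 : M ^ 2 * (1 - (1:ℝ)) = 0 := by ring
        exact (h0 ▸ hcg.tendsto 1).mono_left nhdsWithin_le_nhds
    · rcases eq_or_lt_of_le hx.1 with hxm | hxm
      · -- x = -1
        rw [ContinuousWithinAt, ← hxm, hφm1]
        apply squeeze_zero_norm' (a := fun y => M ^ 2 * (y + 1))
        · have hev : ∀ᶠ y in nhdsWithin (-1:ℝ) (Icc (-1:ℝ) 1), y ∈ Iio (0:ℝ) :=
            eventually_nhdsWithin_of_eventually_nhds (isOpen_Iio.eventually_mem (by norm_num))
          filter_upwards [hev, eventually_mem_nhdsWithin] with y hy0 hy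
          rcases eq_or_lt_of_le hy.1 with h1 | h1
          · rw [← h1, hφm1]
            norm_num
          · have hden : (0:ℝ) < 1 - y ^ 2 := by nlinarith [mem_Iio.mp hy0, h1]
            have hFy : |F y| ≤ M * (y + 1) := hFlem1 y hy
            have hFy2 : |F y| ^ 2 ≤ (M * (y + 1)) ^ 2 := pow_le_pow_left₀ (abs_nonneg _) hFy 2
            have hay : |y| ≤ 1 := abs_le.mpr ⟨h1.le, hy.2⟩
            simp only [Real.norm_eq_abs, hφdef]
            rw [abs_div, abs_of_pos hden, div_le_iff₀ hden, abs_mul, abs_pow]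
            nlinarith [abs_nonneg y, abs_nonneg (F y), mem_Iio.mp hy0]
        · have hcg : Continuous (fun y : ℝ => M ^ 2 * (y + 1)) := continuous_const.mul (continuous_id.add continuous_const)
          have h0 : M ^ 2 * ((-1:ℝ) + 1) = 0 := by ring
          exact (h0 ▸ hcg.tendsto (-1)).mono_left nhdsWithin_le_nhds
      · -- interior
        have hxo : x ∈ Ioo (-1:ℝ) 1 := ⟨hxm, hx1⟩
        apply ContinuousAt.continuousWithinAt
        exact ((continuousAt_id.mul ((hFd x hxo).continuousAt.pow 2)).div
          (by fun_prop) (hne x hxo))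
  -- derivative of φ
  have hφd : ∀ x ∈ Ioo (-1:ℝ) 1, HasDerivAt φ
      ((f x + x / (1 - x ^ 2) * F x) ^ 2 - f x ^ 2 + (F x / (1 - x ^ 2)) ^ 2) x := by
    intro x hx
    have hnex := hne x hx
    have hN : HasDerivAt (fun y => y * F y ^ 2)
        (1 * F x ^ 2 + x * (2 * F x ^ 1 * f x)) x :=
      (hasDerivAt_id x).mul ((hFd x hx).pow 2)
    have hD : HasDerivAt (fun y : ℝ => 1 - y ^ 2) (0 - 2 * x ^ 1) x :=
      (hasDerivAt_const x 1).sub (hasDerivAt_pow 2 x)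
    have h : HasDerivAt (fun y => y * F y ^ 2 / (1 - y ^ 2)) _ x := hN.div hD hnex
    convert h using 1
    field_simp
    ring
  -- Fact 2
  have fact2 : ∫ x in (-1:ℝ)..1,
      ((f x + x / (1 - x ^ 2) * F x) ^ 2 - f x ^ 2 + (F x / (1 - x ^ 2)) ^ 2) = 0 := by
    have h := intervalIntegral.integral_eq_sub_of_hasDeriv_right_of_le
      (f := φ)
      (f' := fun x => (f x + x / (1 - x ^ 2) * F x) ^ 2 - f x ^ 2 + (F x / (1 - x ^ 2)) ^ 2)
      (by norm_num : (-1:ℝ) ≤ 1) hφcont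
      (fun x hx => (hφd x hx).hasDerivWithinAt)
      ((hg1int.sub hf2int).add hg3int)
    rw [h, hφ1, hφm1]
    ring
  -- split fact2
  have hsplit : (∫ x in (-1:ℝ)..1, (f x + x / (1 - x ^ 2) * F x) ^ 2)
      - (∫ x in (-1:ℝ)..1, f x ^ 2) + (∫ x in (-1:ℝ)..1, (F x / (1 - x ^ 2)) ^ 2) = 0 := by
    rw [← intervalIntegral.integral_sub hg1int hf2int,
      ← intervalIntegral.integral_add (hg1int.sub hf2int) hg3int]
    exact fact2
  have hg1nonneg : 0 ≤ ∫ x in (-1:ℝ)..1, (f x + x / (1 - x ^ 2) * F x) ^ 2 :=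
    intervalIntegral.integral_nonneg (by norm_num) (fun u _ => sq_nonneg _)
  have hH : (∫ x in (-1:ℝ)..1, (F x / (1 - x ^ 2)) ^ 2) ≤ ∫ x in (-1:ℝ)..1, f x ^ 2 := by
    linarith
  -- split fact1
  rw [intervalIntegral.integral_add hf2int hFf'int] at fact1
  -- pointwise AM-GM comparison
  have hmono : (∫ x in (-1:ℝ)..1, -(F x * f' x)) ≤
      ∫ x in (-1:ℝ)..1, ((F x / (1 - x ^ 2)) ^ 2 + (1 - x ^ 2) ^ 2 * f' x ^ 2) / 2 := by
    apply intervalIntegral.integral_mono_on (by norm_num)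
      (hIcc (fun x => -(F x * f' x)) ((hFcont.mul hc).neg))
      ((hg3int.add hwint).div_const 2)
    intro x hx
    by_cases hnex : (1:ℝ) - x ^ 2 = 0
    · have hFx : F x = 0 := by
        have h2 : (x - 1) * (x + 1) = 0 := by nlinarith
        rcases mul_eq_zero.mp h2 with h | h
        · have : x = 1 := by linarith
          rw [this, hF1]
        · have : x = -1 := by linarith
          rw [this, hFm1]
      rw [hFx]
      simp only [zero_mul, neg_zero, zero_div]
      positivity
    · have key : F x * f' x = (F x / (1 - x ^ 2)) * ((1 - x ^ 2) * f' x) := by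
        field_simp
      nlinarith [sq_nonneg (F x / (1 - x ^ 2) + (1 - x ^ 2) * f' x)]
  have hneg : (∫ x in (-1:ℝ)..1, -(F x * f' x)) = -(∫ x in (-1:ℝ)..1, F x * f' x) :=
    intervalIntegral.integral_neg
  have hrhs : (∫ x in (-1:ℝ)..1, ((F x / (1 - x ^ 2)) ^ 2 + (1 - x ^ 2) ^ 2 * f' x ^ 2) / 2)
      = ((∫ x in (-1:ℝ)..1, (F x / (1 - x ^ 2)) ^ 2)
        + ∫ x in (-1:ℝ)..1, (1 - x ^ 2) ^ 2 * f' x ^ 2) / 2 := by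
    rw [intervalIntegral.integral_div, intervalIntegral.integral_add hg3int hwint]
  rw [ge_iff_le]
  linarith [hmono, hH, fact1, hneg, hrhs]
end

section
/- The limit as ε → 0⁺ of the Rayleigh quotient (∫₀¹ (1−x²)² (f_ε'(x))² dx)/(∫₀¹ f_ε(x)² dx), with f_ε(x) = x/√(1+ε−x²), equals 1. -/
open Filter

namespace Stmt6Aux

lemma hasDerivAt_f (ε x : ℝ) (hε : 0 < ε) (hx0 : 0 ≤ x) (hx1 : x ≤ 1) :
    HasDerivAt (fun y => y / Real.sqrt (1 + ε - y ^ 2))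
      ((1 + ε) / ((1 + ε - x ^ 2) * Real.sqrt (1 + ε - x ^ 2))) x := by
  have hu : 0 < 1 + ε - x ^ 2 := by nlinarith
  have hsu : 0 < Real.sqrt (1 + ε - x ^ 2) := Real.sqrt_pos.mpr hu
  have hss : Real.sqrt (1 + ε - x ^ 2) ^ 2 = 1 + ε - x ^ 2 := Real.sq_sqrt hu.le
  have h1 : HasDerivAt (fun y : ℝ => 1 + ε - y ^ 2) (-(2 * x)) x := by
    simpa using ((hasDerivAt_pow 2 x).const_sub (1 + ε))
  have h2 := h1.sqrt hu.ne'
  have h3 := (hasDerivAt_id x).div h2 hsu.ne'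
  refine h3.congr_deriv ?_
  symm
  field_simp
  simp only [id]
  linear_combination x ^ 2 * hss

lemma hasDerivAt_atanh (s x : ℝ) (hs : 1 < s) (hx0 : 0 ≤ x) (hx1 : x ≤ 1) :
    HasDerivAt (fun y => (Real.log (s + y) - Real.log (s - y)) / 2)
      (s / (s ^ 2 - x ^ 2)) x := by
  have hp : s + x ≠ 0 := by nlinarith
  have hm : s - x ≠ 0 := by nlinarith
  have h1 : HasDerivAt (fun y : ℝ => Real.log (s + y)) (1 / (s + x)) x := by
    simpa using (((hasDerivAt_id x).const_add s).log hp)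
  have h2 : HasDerivAt (fun y : ℝ => Real.log (s - y)) ((-1) / (s - x)) x := by
    simpa using (((hasDerivAt_id x).const_sub s).log hm)
  have h3 := (h1.sub h2).div_const 2
  refine h3.congr_deriv ?_
  symm
  have hne : s ^ 2 - x ^ 2 ≠ 0 := by nlinarith
  field_simp
  ring

lemma sqrt_facts (ε : ℝ) (hε : 0 < ε) :
    Real.sqrt (1 + ε) ^ 2 = 1 + ε ∧ 1 < Real.sqrt (1 + ε) := by
  have h1 : Real.sqrt (1 + ε) ^ 2 = 1 + ε := Real.sq_sqrt (by linarith)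
  refine ⟨h1, ?_⟩
  nlinarith [Real.sqrt_nonneg (1 + ε)]

lemma integral_denom (ε : ℝ) (hε : 0 < ε) :
    ∫ x in (0:ℝ)..1, (x / Real.sqrt (1 + ε - x ^ 2)) ^ 2 =
      Real.sqrt (1 + ε) *
        ((Real.log (Real.sqrt (1 + ε) + 1) - Real.log (Real.sqrt (1 + ε) - 1)) / 2) - 1 := by
  set s := Real.sqrt (1 + ε) with hsdef
  obtain ⟨hs2, hs1⟩ := sqrt_facts ε hε
  have hIcc : Set.uIcc (0:ℝ) 1 = Set.Icc 0 1 := Set.uIcc_of_le (by norm_num)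
  have key : ∫ x in (0:ℝ)..1, (x / Real.sqrt (1 + ε - x ^ 2)) ^ 2 =
      (s * ((Real.log (s + 1) - Real.log (s - 1)) / 2) - 1) -
      (s * ((Real.log (s + 0) - Real.log (s - 0)) / 2) - 0) := by
    apply intervalIntegral.integral_eq_sub_of_hasDerivAt
      (f := fun y => s * ((Real.log (s + y) - Real.log (s - y)) / 2) - y)
    · intro x hx
      rw [hIcc] at hx
      obtain ⟨hx0, hx1⟩ := hx
      have hu : 0 < 1 + ε - x ^ 2 := by nlinarith
      have hss : Real.sqrt (1 + ε - x ^ 2) ^ 2 = 1 + ε - x ^ 2 := Real.sq_sqrt hu.le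
      have h1 := ((hasDerivAt_atanh s x hs1 hx0 hx1).const_mul s).sub (hasDerivAt_id x)
      refine h1.congr_deriv ?_
      symm
      rw [div_pow, hss]
      have hne : s ^ 2 - x ^ 2 ≠ 0 := by nlinarith
      field_simp
      linear_combination x ^ 2 * hs2
    · apply ContinuousOn.intervalIntegrable
      rw [hIcc]
      apply ContinuousOn.pow
      apply ContinuousOn.div continuousOn_id
      · exact ((continuous_const.sub (continuous_pow 2)).continuousOn).sqrt
      · intro x hx
        obtain ⟨hx0, hx1⟩ := hx
        have hu : 0 < 1 + ε - x ^ 2 := by nlinarith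
        exact (Real.sqrt_pos.mpr hu).ne'
  rw [key]
  simp

set_option maxHeartbeats 2000000 in
lemma integral_numer (ε : ℝ) (hε : 0 < ε) :
    ∫ x in (0:ℝ)..1, (1 - x ^ 2) ^ 2 *
        (deriv (fun y => y / Real.sqrt (1 + ε - y ^ 2)) x) ^ 2 =
      ((1 + ε) ^ 2 - (1 + ε) * ε + 3 * ε ^ 2 / 8) *
        ((Real.log (Real.sqrt (1 + ε) + 1) - Real.log (Real.sqrt (1 + ε) - 1)) / 2)
        / Real.sqrt (1 + ε)
      - 3 * (1 + ε) / 4 + 3 * ε / 8 := by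
  set s := Real.sqrt (1 + ε) with hsdef
  obtain ⟨hs2, hs1⟩ := sqrt_facts ε hε
  have hs0 : s ≠ 0 := by positivity
  have hIcc : Set.uIcc (0:ℝ) 1 = Set.Icc 0 1 := Set.uIcc_of_le (by norm_num)
  set A : ℝ := (1 + ε) ^ 2 - (1 + ε) * ε + 3 * ε ^ 2 / 8 with hA
  set c2 : ℝ := -((1 + ε) * ε) + 3 * ε ^ 2 / 8 with hc2
  set c3 : ℝ := (1 + ε) * ε ^ 2 / 4 with hc3
  -- step 1: rewrite the integrand using the derivative formula
  have hcongr : ∫ x in (0:ℝ)..1, (1 - x ^ 2) ^ 2 *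
        (deriv (fun y => y / Real.sqrt (1 + ε - y ^ 2)) x) ^ 2 =
      ∫ x in (0:ℝ)..1, (1 + ε) ^ 2 * (1 - x ^ 2) ^ 2 / (1 + ε - x ^ 2) ^ 3 := by
    apply intervalIntegral.integral_congr
    intro x hx
    rw [hIcc] at hx
    obtain ⟨hx0, hx1⟩ := hx
    have hu : 0 < 1 + ε - x ^ 2 := by nlinarith
    have hsu : 0 < Real.sqrt (1 + ε - x ^ 2) := Real.sqrt_pos.mpr hu
    have hss : Real.sqrt (1 + ε - x ^ 2) ^ 2 = 1 + ε - x ^ 2 := Real.sq_sqrt hu.le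
    dsimp only
    rw [(hasDerivAt_f ε x hε hx0 hx1).deriv]
    rw [div_pow, mul_pow, hss]
    field_simp
  rw [hcongr]
  have key : ∫ x in (0:ℝ)..1, (1 + ε) ^ 2 * (1 - x ^ 2) ^ 2 / (1 + ε - x ^ 2) ^ 3 =
      ((A / s) * ((Real.log (s + 1) - Real.log (s - 1)) / 2)
        + c2 * (1 / (1 + ε - 1 ^ 2)) + c3 * (1 / (1 + ε - 1 ^ 2) ^ 2))
      - ((A / s) * ((Real.log (s + 0) - Real.log (s - 0)) / 2)
        + c2 * (0 / (1 + ε - 0 ^ 2)) + c3 * (0 / (1 + ε - 0 ^ 2) ^ 2)) := by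
    apply intervalIntegral.integral_eq_sub_of_hasDerivAt
      (f := fun y => (A / s) * ((Real.log (s + y) - Real.log (s - y)) / 2)
        + c2 * (y / (1 + ε - y ^ 2)) + c3 * (y / (1 + ε - y ^ 2) ^ 2))
    · intro x hx
      rw [hIcc] at hx
      obtain ⟨hx0, hx1⟩ := hx
      have hu : 0 < 1 + ε - x ^ 2 := by nlinarith
      have hinner : HasDerivAt (fun y : ℝ => 1 + ε - y ^ 2) (-(2 * x)) x := by
        simpa using ((hasDerivAt_pow 2 x).const_sub (1 + ε))
      have h1 : HasDerivAt
          (fun y => (A / s) * ((Real.log (s + y) - Real.log (s - y)) / 2))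
          (A / (1 + ε - x ^ 2)) x := by
        have := (hasDerivAt_atanh s x hs1 hx0 hx1).const_mul (A / s)
        refine this.congr_deriv ?_
        symm
        rw [hs2]
        field_simp
      have h2 := ((hasDerivAt_id x).div hinner hu.ne').const_mul c2
      have h3 := ((hasDerivAt_id x).div (hinner.pow 2) (pow_ne_zero 2 hu.ne')).const_mul c3
      have h := (h1.add h2).add h3
      refine h.congr_deriv ?_
      symm
      simp only [Pi.pow_apply, id]
      rw [hA, hc2, hc3]
      field_simp
      ring
    · apply ContinuousOn.intervalIntegrable
      rw [hIcc]
      apply ContinuousOn.div (Continuous.continuousOn (by continuity))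
        (Continuous.continuousOn (by continuity))
      intro x hx
      obtain ⟨hx0, hx1⟩ := hx
      have hu : 0 < 1 + ε - x ^ 2 := by nlinarith
      positivity
  rw [key]
  have he1 : 1 + ε - 1 ^ 2 = ε := by ring
  rw [he1]
  simp only [add_zero, sub_zero, sub_self, zero_div, mul_zero, zero_mul, zero_add, sub_zero]
  rw [hA, hc2, hc3]
  field_simp
  ring

lemma log_sub_one (ε : ℝ) (hε : 0 < ε) :
    (Real.log (Real.sqrt (1 + ε) + 1) - Real.log (Real.sqrt (1 + ε) - 1)) / 2 =
      Real.log (Real.sqrt (1 + ε) + 1) - Real.log ε / 2 := by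
  obtain ⟨hs2, hs1⟩ := sqrt_facts ε hε
  set s := Real.sqrt (1 + ε)
  have hm : s - 1 ≠ 0 := by linarith
  have hp : s + 1 ≠ 0 := by linarith
  have hprod : (s - 1) * (s + 1) = ε := by linear_combination hs2
  have hlog : Real.log ε = Real.log (s - 1) + Real.log (s + 1) := by
    rw [← hprod, Real.log_mul hm hp]
  rw [hlog]; ring

end Stmt6Aux

open Stmt6Aux in
theorem stmt_6 :
    Tendsto
      (fun ε : ℝ =>
        (∫ x in (0:ℝ)..1, (1 - x ^ 2) ^ 2 *
            (deriv (fun y => y / Real.sqrt (1 + ε - y ^ 2)) x) ^ 2) /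
          (∫ x in (0:ℝ)..1, (x / Real.sqrt (1 + ε - x ^ 2)) ^ 2))
      (nhdsWithin 0 (Set.Ioi 0)) (nhds 1) := by
  set S : ℝ → ℝ := fun ε => Real.sqrt (1 + ε) with hS
  set A : ℝ → ℝ := fun ε => (1 + ε) ^ 2 - (1 + ε) * ε + 3 * ε ^ 2 / 8 with hA
  set B : ℝ → ℝ := fun ε => -(3 * (1 + ε) / 4) + 3 * ε / 8 with hB
  set L : ℝ → ℝ := fun ε => Real.log (S ε + 1) + (-(1/2)) * Real.log ε with hL
  have hε0 : Tendsto (fun ε : ℝ => ε) (nhdsWithin 0 (Set.Ioi 0)) (nhds 0) :=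
    tendsto_id.mono_right nhdsWithin_le_nhds
  have hs : Tendsto S (nhdsWithin 0 (Set.Ioi 0)) (nhds 1) := by
    have := ((tendsto_const_nhds (x := (1:ℝ))).add hε0).sqrt
    simpa using this
  have hLtop : Tendsto L (nhdsWithin 0 (Set.Ioi 0)) atTop := by
    apply Filter.Tendsto.add_atTop (C := Real.log 2)
    · refine (Real.continuousAt_log (by norm_num)).tendsto.comp ?_
      have := hs.add (tendsto_const_nhds (x := (1:ℝ)))
      norm_num at this
      exact this
    · exact Tendsto.const_mul_atBot_of_neg (by norm_num)
        Real.tendsto_log_nhdsGT_zero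
  have hLinv : Tendsto (fun ε => (L ε)⁻¹) (nhdsWithin 0 (Set.Ioi 0)) (nhds 0) :=
    hLtop.inv_tendsto_atTop
  have hAlim : Tendsto A (nhdsWithin 0 (Set.Ioi 0)) (nhds 1) := by
    have : Tendsto A (nhdsWithin 0 (Set.Ioi 0))
        (nhds ((1 + 0) ^ 2 - (1 + 0) * 0 + 3 * 0 ^ 2 / 8)) := by
      apply Tendsto.add (Tendsto.sub ?_ ?_) ?_
      · exact ((tendsto_const_nhds.add hε0).pow 2)
      · exact (tendsto_const_nhds.add hε0).mul hε0
      · exact ((tendsto_const_nhds.mul (hε0.pow 2)).div_const 8)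
    simpa using this
  have hBlim : Tendsto B (nhdsWithin 0 (Set.Ioi 0)) (nhds (-(3/4))) := by
    have : Tendsto B (nhdsWithin 0 (Set.Ioi 0))
        (nhds (-(3 * (1 + 0) / 4) + 3 * 0 / 8)) := by
      apply Tendsto.add ?_ ?_
      · exact (((tendsto_const_nhds.mul (tendsto_const_nhds.add hε0)).div_const 4)).neg
      · exact (tendsto_const_nhds.mul hε0).div_const 8
    simpa using this
  have hglim : Tendsto
      (fun ε => (A ε / S ε + B ε * (L ε)⁻¹) / (S ε - (L ε)⁻¹))
      (nhdsWithin 0 (Set.Ioi 0)) (nhds 1) := by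
    have hnum : Tendsto (fun ε => A ε / S ε + B ε * (L ε)⁻¹)
        (nhdsWithin 0 (Set.Ioi 0)) (nhds (1 / 1 + (-(3/4)) * 0)) :=
      (hAlim.div hs one_ne_zero).add (hBlim.mul hLinv)
    have hden : Tendsto (fun ε => S ε - (L ε)⁻¹)
        (nhdsWithin 0 (Set.Ioi 0)) (nhds (1 - 0)) := hs.sub hLinv
    have := hnum.div hden (by norm_num)
    simp at this; exact this
  apply hglim.congr'
  filter_upwards [Ioo_mem_nhdsGT_of_mem (Set.mem_Ico.mpr ⟨le_refl (0:ℝ), one_pos⟩)]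
    with ε hε
  obtain ⟨hε0', hε1⟩ := hε
  obtain ⟨hs2, hs1⟩ := sqrt_facts ε hε0'
  have hLval : (Real.log (S ε + 1) - Real.log (S ε - 1)) / 2 = L ε := by
    rw [log_sub_one ε hε0']; simp [hL]; ring
  have hLpos : 0 < L ε := by
    have h1 : 0 < Real.log (S ε + 1) := Real.log_pos (by simp only [hS]; linarith)
    have h2 : Real.log ε < 0 := Real.log_neg hε0' hε1
    simp only [hL]
    nlinarith
  have hnum := integral_numer ε hε0'
  have hden := integral_denom ε hε0'
  rw [hnum, hden, hLval]
  have hs0 : S ε ≠ 0 := by simp only [hS]; positivity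
  have h1 : A ε / S ε + B ε * (L ε)⁻¹ =
      (A ε * (L ε) / S ε + (-(3 * (1 + ε) / 4) + 3 * ε / 8)) / L ε := by
    rw [hB]
    field_simp
  have h2 : S ε - (L ε)⁻¹ = (S ε * L ε - 1) / L ε := by
    field_simp
  rw [h1, h2]
  rcases eq_or_ne (S ε * L ε - 1) 0 with h0 | h0
  · rw [h0]
    simp
  · rw [div_div_div_cancel_right₀]
    · rw [hA]
      simp only [hS]
      ring_nf
    · exact hLpos.ne'
end

section
/- For every continuously differentiable f on [-1,1] with ∫₋₁¹ f = 0 and every μ > 0, ∫₋₁¹ (1-x²)(1+μ(1-x²)) (f'(x))² dx ≥ (μ + 2) ∫₋₁¹ f(x)² dx. -/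
open MeasureTheory intervalIntegral Set Filter Topology

private lemma Fbound (φ : ℝ → ℝ) (hφ : Continuous φ) (havg : ∫ x in (-1:ℝ)..1, φ x = 0)
    {M : ℝ} (hM : ∀ x, |φ x| ≤ M) :
    ∀ x ∈ Icc (-1:ℝ) 1, |∫ t in (-1:ℝ)..x, φ t| ≤ M * (1 - x^2) := by
  have hM0 : 0 ≤ M := (abs_nonneg _).trans (hM 0)
  intro x hx
  obtain ⟨hx1, hx2⟩ := hx
  have hb1 : |∫ t in (-1:ℝ)..x, φ t| ≤ M * (x + 1) := by
    have h := intervalIntegral.norm_integral_le_of_norm_le_const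
      (C := M) (f := φ) (a := (-1:ℝ)) (b := x)
      (fun t _ => by rw [Real.norm_eq_abs]; exact hM t)
    rw [Real.norm_eq_abs] at h
    calc |∫ t in (-1:ℝ)..x, φ t| ≤ M * |x - (-1)| := h
      _ = M * (x + 1) := by rw [abs_of_nonneg (by linarith)]; ring
  have hsplit : (∫ t in (-1:ℝ)..x, φ t) = - ∫ t in x..(1:ℝ), φ t := by
    have h := intervalIntegral.integral_add_adjacent_intervals
      (μ := volume) (a := (-1:ℝ)) (b := x) (c := (1:ℝ))
      (hφ.intervalIntegrable _ _) (hφ.intervalIntegrable _ _)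
    rw [havg] at h
    linarith
  have hb2 : |∫ t in (-1:ℝ)..x, φ t| ≤ M * (1 - x) := by
    rw [hsplit, abs_neg]
    have h := intervalIntegral.norm_integral_le_of_norm_le_const
      (C := M) (f := φ) (a := x) (b := (1:ℝ))
      (fun t _ => by rw [Real.norm_eq_abs]; exact hM t)
    rw [Real.norm_eq_abs] at h
    calc |∫ t in x..(1:ℝ), φ t| ≤ M * |1 - x| := h
      _ = M * (1 - x) := by rw [abs_of_nonneg (by linarith)]
  rcases le_or_gt 0 x with h0 | h0
  · calc |∫ t in (-1:ℝ)..x, φ t| ≤ M * (1 - x) := hb2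
      _ ≤ M * (1 - x^2) := by nlinarith [mul_nonneg hM0 (mul_nonneg h0 (by linarith : (0:ℝ) ≤ 1 - x))]
  · calc |∫ t in (-1:ℝ)..x, φ t| ≤ M * (x + 1) := hb1
      _ ≤ M * (1 - x^2) := by nlinarith [mul_nonneg hM0 (mul_nonneg (by linarith : (0:ℝ) ≤ -x) (by linarith : (0:ℝ) ≤ x + 1))]


private lemma intOn (g : ℝ → ℝ) (hgm : Measurable g) {M : ℝ}
    (hgb : ∀ x ∈ Icc (-1:ℝ) 1, |g x| ≤ M) (W : ℝ → ℝ) (hW : Continuous W) {C : ℝ}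
    (hWb : ∀ x ∈ Icc (-1:ℝ) 1, |W x| ≤ C) :
    IntegrableOn (fun x => W x * g x ^ 2) (Ioo (-1:ℝ) 1) volume := by
  refine Measure.integrableOn_of_bounded (M := C * M^2) ?_ ?_ ?_
  · exact (measure_Ioo_lt_top).ne
  · exact ((hW.measurable.mul (hgm.pow_const 2))).aestronglyMeasurable
  · rw [ae_restrict_iff' measurableSet_Ioo]
    refine ae_of_all _ fun x hx => ?_
    have hx' : x ∈ Icc (-1:ℝ) 1 := Ioo_subset_Icc_self hx
    have h1 : |g x| ≤ M := hgb x hx'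
    have h2 : |W x| ≤ C := hWb x hx'
    have h3 : g x ^ 2 ≤ M ^ 2 := by nlinarith [abs_nonneg (g x), neg_abs_le (g x), le_abs_self (g x)]
    have h0 : (0:ℝ) ≤ M := (abs_nonneg _).trans h1
    rw [Real.norm_eq_abs, abs_mul, abs_pow, sq_abs]
    exact mul_le_mul h2 h3 (sq_nonneg _) ((abs_nonneg _).trans h2)

private lemma intervalInt_of_Ioo {h : ℝ → ℝ} (hh : IntegrableOn h (Ioo (-1:ℝ) 1) volume) :
    IntervalIntegrable h volume (-1) 1 := by
  rw [intervalIntegrable_iff_integrableOn_Ioo_of_le (by norm_num : (-1:ℝ) ≤ 1)]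
  exact hh

private lemma interval_eq_Ioo (h : ℝ → ℝ) :
    (∫ x in (-1:ℝ)..1, h x) = ∫ x in Ioo (-1:ℝ) 1, h x := by
  rw [intervalIntegral.integral_of_le (by norm_num : (-1:ℝ) ≤ 1),
    MeasureTheory.integral_Ioc_eq_integral_Ioo]

private lemma scalar_ineq (μ s : ℝ) (hμ : 0 < μ) (hs : 0 ≤ s) :
    s / (1 + μ * s) ≤ (4 * s + μ) / (2 + μ)^2 := by
  have h1 : 0 < 1 + μ * s := by nlinarith
  have h2 : (0:ℝ) < (2 + μ)^2 := by positivity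
  rw [div_le_div_iff₀ h1 h2]
  nlinarith [sq_nonneg (2*s - 1), hμ.le, sq_nonneg s]

set_option maxHeartbeats 1000000 in
private lemma hardy_aux (φ : ℝ → ℝ) (hφ : Continuous φ)
    (havg : ∫ x in (-1:ℝ)..1, φ x = 0) {M : ℝ} (hM : ∀ x, |φ x| ≤ M)
    (F g : ℝ → ℝ) (hFdef : F = fun x => ∫ t in (-1:ℝ)..x, φ t)
    (hgdef : ∀ x, g x = F x / (1 - x^2))
    (hFb : ∀ x ∈ Icc (-1:ℝ) 1, |F x| ≤ M * (1 - x^2)) (c : ℝ) :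
    ∫ x in (-1:ℝ)..1, (c*(1+x^2) - c^2*x^2) * (g x)^2 ≤ ∫ x in (-1:ℝ)..1, (φ x)^2 := by
  have hM0 : 0 ≤ M := (abs_nonneg _).trans (hM 0)
  have hFd : ∀ x, HasDerivAt F (φ x) x := by
    intro x
    rw [hFdef]
    exact (hφ.integral_hasStrictDerivAt (-1) x).hasDerivAt
  have hFc : Continuous F := continuous_iff_continuousAt.mpr fun x => (hFd x).continuousAt
  have hden : Continuous fun x : ℝ => 1 - x^2 := continuous_const.sub (continuous_pow 2)
  have hgm : Measurable g := by
    have : g = fun x => F x / (1 - x^2) := funext hgdef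
    rw [this]
    exact hFc.measurable.div hden.measurable
  have hgb : ∀ x ∈ Icc (-1:ℝ) 1, |g x| ≤ M := by
    intro x hx
    rcases eq_or_ne (1 - x^2) 0 with h | h
    · rw [hgdef, h, div_zero, abs_zero]; exact hM0
    · have hpos : 0 < 1 - x^2 := by
        rcases lt_or_eq_of_le (by nlinarith [hx.1, hx.2] : (0:ℝ) ≤ 1 - x^2) with h' | h'
        · exact h'
        · exact absurd h'.symm h
      rw [hgdef, abs_div, abs_of_pos hpos, div_le_iff₀ hpos]
      calc |F x| ≤ M * (1 - x^2) := hFb x hx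
        _ = M * (1 - x^2) := rfl
  have hgc : ContinuousOn g (Ioo (-1:ℝ) 1) := by
    intro x hx
    have h : 1 - x^2 ≠ 0 := by nlinarith [hx.1, hx.2]
    have : ContinuousAt g x := by
      have hcongr : g = fun y => F y / (1 - y^2) := funext hgdef
      rw [hcongr]
      exact hFc.continuousAt.div hden.continuousAt h
    exact this.continuousWithinAt
  -- derivative of boundary function
  set B : ℝ → ℝ := fun x => x * F x ^ 2 / (1 - x^2) with hBdef
  set D : ℝ → ℝ := fun x => (1 + x^2) * g x ^ 2 + 2 * x * φ x * g x with hDdef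
  have hBd : ∀ x ∈ Ioo (-1:ℝ) 1, HasDerivAt B (D x) x := by
    intro x hx
    have h : 1 - x^2 ≠ 0 := by nlinarith [hx.1, hx.2]
    have hN : HasDerivAt (fun y => y * F y ^ 2) (1 * F x ^ 2 + x * (2 * F x ^ 1 * φ x)) x :=
      (hasDerivAt_id x).mul ((hFd x).pow 2)
    have hD2 : HasDerivAt (fun y : ℝ => 1 - y^2) (0 - 2 * x ^ 1) x :=
      (hasDerivAt_const x 1).sub (hasDerivAt_pow 2 x)
    have hdiv := hN.div hD2 h
    refine hdiv.congr_deriv ?_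
    rw [hDdef]
    simp only
    rw [hgdef]
    field_simp
    ring
  have hBb : ∀ x ∈ Icc (-1:ℝ) 1, |B x| ≤ M^2 * (1 - x^2) := by
    intro x hx
    rcases eq_or_ne (1 - x^2) 0 with h | h
    · rw [hBdef]; simp only [h, div_zero, abs_zero]
      positivity
    · have hpos : 0 < 1 - x^2 := by
        rcases lt_or_eq_of_le (by nlinarith [hx.1, hx.2] : (0:ℝ) ≤ 1 - x^2) with h' | h'
        · exact h'
        · exact absurd h'.symm h
      have hax : |x| ≤ 1 := abs_le.mpr ⟨hx.1, hx.2⟩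
      have hFx : |F x| ≤ M * (1 - x^2) := hFb x hx
      have hF2 : F x ^ 2 ≤ (M * (1 - x^2))^2 := by
        nlinarith [abs_nonneg (F x), neg_abs_le (F x), le_abs_self (F x)]
      rw [hBdef]
      simp only
      rw [abs_div, abs_of_pos hpos, div_le_iff₀ hpos, abs_mul, abs_pow, sq_abs]
      calc |x| * F x ^ 2 ≤ 1 * (M * (1 - x^2))^2 :=
            mul_le_mul hax hF2 (sq_nonneg _) zero_le_one
        _ = M^2 * (1 - x^2) * (1 - x^2) := by ring
  -- the weight
  set W : ℝ → ℝ := fun x => c*(1+x^2) - c^2*x^2 with hWdef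
  have hWc : Continuous W := by
    rw [hWdef]
    exact (continuous_const.mul (continuous_const.add (continuous_pow 2))).sub
      (continuous_const.mul (continuous_pow 2))
  have hWb : ∀ x ∈ Icc (-1:ℝ) 1, |W x| ≤ 2 * |c| + c^2 := by
    intro x hx
    have hx2 : x^2 ≤ 1 := by nlinarith [hx.1, hx.2]
    have h1 : |c*(1+x^2)| ≤ 2 * |c| := by
      rw [abs_mul, abs_of_pos (show (0:ℝ) < 1 + x^2 by positivity), mul_comm]
      exact mul_le_mul_of_nonneg_right (by linarith) (abs_nonneg c)
    have h2 : |c^2*x^2| ≤ c^2 := by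
      rw [abs_mul, abs_of_nonneg (sq_nonneg c), abs_of_nonneg (sq_nonneg x)]
      nlinarith [sq_nonneg c]
    calc |W x| = |c*(1+x^2) + -(c^2*x^2)| := by rw [hWdef]; ring_nf
      _ ≤ |c*(1+x^2)| + |-(c^2*x^2)| := abs_add_le _ _
      _ = |c*(1+x^2)| + |c^2*x^2| := by rw [abs_neg]
      _ ≤ 2 * |c| + c^2 := add_le_add h1 h2
  have hint1 : IntegrableOn (fun x => W x * g x ^ 2) (Ioo (-1:ℝ) 1) volume :=
    intOn g hgm hgb W hWc hWb
  have hφ2 : IntegrableOn (fun x => φ x ^ 2) (Ioo (-1:ℝ) 1) volume :=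
    ((hφ.pow 2).continuousOn.integrableOn_Icc).mono_set Ioo_subset_Icc_self
  -- exhausting sequences
  set aa : ℕ → ℝ := fun n => -1 + 1/((n:ℝ)+1) with haa
  set bb : ℕ → ℝ := fun n => 1 - 1/((n:ℝ)+1) with hbb
  have hpos : ∀ n : ℕ, 0 < 1/((n:ℝ)+1) := fun n => by positivity
  have hle1 : ∀ n : ℕ, 1/((n:ℝ)+1) ≤ 1 := fun n => by
    rw [div_le_one (by positivity)]
    simp [Nat.cast_nonneg]
  have hav : ∀ n, aa n = -1 + 1/((n:ℝ)+1) := fun n => rfl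
  have hbv : ∀ n, bb n = 1 - 1/((n:ℝ)+1) := fun n => rfl
  have haIcc : ∀ n, aa n ∈ Icc (-1:ℝ) 1 := fun n =>
    ⟨by rw [hav]; nlinarith [hpos n], by rw [hav]; nlinarith [hle1 n]⟩
  have hbIcc : ∀ n, bb n ∈ Icc (-1:ℝ) 1 := fun n =>
    ⟨by rw [hbv]; nlinarith [hle1 n], by rw [hbv]; nlinarith [hpos n]⟩
  have hab : ∀ n, aa n ≤ bb n := fun n => by rw [hav, hbv]; nlinarith [hle1 n]
  have hsub : ∀ n, Icc (aa n) (bb n) ⊆ Ioo (-1:ℝ) 1 := fun n =>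
    Icc_subset_Ioo (by rw [hav]; nlinarith [hpos n]) (by rw [hbv]; nlinarith [hpos n])
  -- compact interval estimate
  have hcomp : ∀ n : ℕ, -(c * (B (bb n) - B (aa n)))
      ≤ ∫ x in Ioo (aa n) (bb n), (φ x ^ 2 - W x * g x ^ 2) := by
    intro n
    have hIccIoo := hsub n
    have hgcn : ContinuousOn g (Icc (aa n) (bb n)) := hgc.mono hIccIoo
    have hu : uIcc (aa n) (bb n) = Icc (aa n) (bb n) := uIcc_of_le (hab n)
    have hDc : ContinuousOn D (Icc (aa n) (bb n)) := by
      rw [hDdef]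
      exact ((continuous_const.add (continuous_pow 2)).continuousOn.mul (hgcn.pow 2)).add
        ((((continuous_const.mul continuous_id).continuousOn.mul hφ.continuousOn)).mul hgcn)
    have hDi : IntervalIntegrable D volume (aa n) (bb n) :=
      (show ContinuousOn D (uIcc (aa n) (bb n)) by rw [hu]; exact hDc).intervalIntegrable
    have hftc : ∫ x in (aa n)..(bb n), D x = B (bb n) - B (aa n) :=
      intervalIntegral.integral_eq_sub_of_hasDerivAt
        (fun x hx => hBd x (hIccIoo (hu ▸ hx))) hDi
    have hcont1 : ContinuousOn (fun x => (φ x + c*x*g x)^2) (Icc (aa n) (bb n)) :=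
      ((hφ.continuousOn.add (((continuous_const.mul continuous_id).continuousOn).mul hgcn)).pow 2)
    have hint2 : IntervalIntegrable (fun x => (φ x + c*x*g x)^2) volume (aa n) (bb n) :=
      (show ContinuousOn (fun x => (φ x + c*x*g x)^2) (uIcc (aa n) (bb n)) by
        rw [hu]; exact hcont1).intervalIntegrable
    have hsq : 0 ≤ ∫ x in (aa n)..(bb n), (φ x + c * x * g x)^2 :=
      intervalIntegral.integral_nonneg (hab n) (fun x _ => sq_nonneg _)
    have heq : ∀ x : ℝ, φ x ^ 2 - W x * g x ^ 2 = (φ x + c*x*g x)^2 - c * D x := by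
      intro x; rw [hWdef, hDdef]; simp only; ring
    have hspl : ∫ x in (aa n)..(bb n), (φ x ^ 2 - W x * g x ^ 2)
        = (∫ x in (aa n)..(bb n), (φ x + c*x*g x)^2) - c * ∫ x in (aa n)..(bb n), D x := by
      rw [← intervalIntegral.integral_const_mul,
        ← intervalIntegral.integral_sub hint2 (hDi.const_mul c)]
      exact intervalIntegral.integral_congr (fun x _ => heq x)
    have : (∫ x in Ioo (aa n) (bb n), (φ x ^ 2 - W x * g x ^ 2))
        = ∫ x in (aa n)..(bb n), (φ x ^ 2 - W x * g x ^ 2) := by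
      rw [intervalIntegral.integral_of_le (hab n), MeasureTheory.integral_Ioc_eq_integral_Ioo]
    rw [this, hspl, hftc]
    linarith
  -- limits of the boundary terms
  have htend0 := tendsto_one_div_add_atTop_nhds_zero_nat (𝕜 := ℝ)
  have haT : Tendsto aa atTop (𝓝 (-1)) := by
    have h : Tendsto (fun n : ℕ => -1 + 1/((n:ℝ)+1)) atTop (𝓝 (-1 + 0)) :=
      tendsto_const_nhds.add htend0
    rw [haa]
    simpa using h
  have hbT : Tendsto bb atTop (𝓝 1) := by
    have h : Tendsto (fun n : ℕ => 1 - 1/((n:ℝ)+1)) atTop (𝓝 (1 - 0)) :=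
      tendsto_const_nhds.sub htend0
    rw [hbb]
    simpa using h
  have hsqueeze : ∀ (u : ℕ → ℝ) (l : ℝ), Tendsto u atTop (𝓝 l) → (∀ n, u n ∈ Icc (-1:ℝ) 1) →
      l^2 = 1 → Tendsto (fun n => B (u n)) atTop (𝓝 0) := by
    intro u l hu hmem hl
    apply squeeze_zero_norm (a := fun n => M^2 * (1 - (u n)^2))
    · intro n
      rw [Real.norm_eq_abs]
      exact hBb (u n) (hmem n)
    · have : Tendsto (fun n => M^2 * (1 - (u n)^2)) atTop (𝓝 (M^2 * (1 - l^2))) :=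
        tendsto_const_nhds.mul (tendsto_const_nhds.sub (hu.pow 2))
      rw [hl] at this
      simpa using this
  have hBaT : Tendsto (fun n => B (aa n)) atTop (𝓝 0) :=
    hsqueeze aa (-1) haT haIcc (by norm_num)
  have hBbT : Tendsto (fun n => B (bb n)) atTop (𝓝 0) :=
    hsqueeze bb 1 hbT hbIcc (by norm_num)
  have hBz : Tendsto (fun n => -(c * (B (bb n) - B (aa n)))) atTop (𝓝 0) := by
    have := ((hBbT.sub hBaT).const_mul c).neg
    simpa using this
  -- union of the exhausting sets
  have hU : (⋃ n, Ioo (aa n) (bb n)) = Ioo (-1:ℝ) 1 := by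
    apply Subset.antisymm
    · exact iUnion_subset fun n => Ioo_subset_Ioo
        (by rw [hav]; nlinarith [hpos n]) (by rw [hbv]; nlinarith [hpos n])
    · intro x hx
      obtain ⟨n₁, h₁⟩ := exists_nat_one_div_lt (show (0:ℝ) < x + 1 by linarith [hx.1])
      obtain ⟨n₂, h₂⟩ := exists_nat_one_div_lt (show (0:ℝ) < 1 - x by linarith [hx.2])
      refine mem_iUnion.mpr ⟨n₁ + n₂, ?_⟩
      have c₁ : ((n₁:ℝ)+1) ≤ (((n₁+n₂:ℕ)):ℝ)+1 := by
        push_cast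
        have : (0:ℝ) ≤ (n₂:ℝ) := Nat.cast_nonneg n₂
        linarith
      have c₂ : ((n₂:ℝ)+1) ≤ (((n₁+n₂:ℕ)):ℝ)+1 := by
        push_cast
        have : (0:ℝ) ≤ (n₁:ℝ) := Nat.cast_nonneg n₁
        linarith
      have e₁ : 1/((((n₁+n₂:ℕ)):ℝ)+1) ≤ 1/((n₁:ℝ)+1) :=
        one_div_le_one_div_of_le (by positivity) c₁
      have e₂ : 1/((((n₁+n₂:ℕ)):ℝ)+1) ≤ 1/((n₂:ℝ)+1) :=
        one_div_le_one_div_of_le (by positivity) c₂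
      constructor
      · rw [hav]; linarith
      · rw [hbv]; linarith
  have hmono : Monotone (fun n => Ioo (aa n) (bb n)) := by
    intro m n hmn
    have cmn : ((m:ℝ)+1) ≤ ((n:ℝ)+1) := by
      have : (m:ℝ) ≤ (n:ℝ) := Nat.cast_le.mpr hmn
      linarith
    have e := one_div_le_one_div_of_le (show (0:ℝ) < (m:ℝ)+1 by positivity) cmn
    exact Ioo_subset_Ioo (by rw [hav, hav]; linarith) (by rw [hbv, hbv]; linarith)
  have hfi : IntegrableOn (fun x => φ x ^ 2 - W x * g x ^ 2) (⋃ n, Ioo (aa n) (bb n)) volume := by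
    rw [hU]; exact hφ2.sub hint1
  have hset : Tendsto (fun n => ∫ x in Ioo (aa n) (bb n), (φ x ^ 2 - W x * g x ^ 2)) atTop
      (𝓝 (∫ x in Ioo (-1:ℝ) 1, (φ x ^ 2 - W x * g x ^ 2))) := by
    have := tendsto_setIntegral_of_monotone (fun n => measurableSet_Ioo) hmono hfi
    rwa [hU] at this
  have h0 : (0:ℝ) ≤ ∫ x in Ioo (-1:ℝ) 1, (φ x ^ 2 - W x * g x ^ 2) :=
    le_of_tendsto_of_tendsto' hBz hset hcomp
  have hdiff : (∫ x in Ioo (-1:ℝ) 1, (φ x ^ 2 - W x * g x ^ 2))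
      = (∫ x in Ioo (-1:ℝ) 1, φ x ^ 2) - ∫ x in Ioo (-1:ℝ) 1, W x * g x ^ 2 :=
    integral_sub hφ2 hint1
  rw [interval_eq_Ioo, interval_eq_Ioo]
  have hWx : ∀ x : ℝ, (c*(1+x^2) - c^2*x^2) * g x ^ 2 = W x * g x ^ 2 := fun x => by
    rw [hWdef]
  simp only [hWx]
  linarith
set_option maxHeartbeats 4000000 in
theorem stmt_7 (f f' : ℝ → ℝ)
    (hd : ∀ x ∈ Set.Icc (-1:ℝ) 1, HasDerivAt f (f' x) x)
    (hc : ContinuousOn f' (Set.Icc (-1:ℝ) 1))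
    (havg : ∫ x in (-1:ℝ)..1, f x = 0) (μ : ℝ) (hμ : μ > 0) :
    ∫ x in (-1:ℝ)..1, (1 - x ^ 2) * (1 + μ * (1 - x ^ 2)) * (f' x) ^ 2 ≥
      (μ + 2) * ∫ x in (-1:ℝ)..1, (f x) ^ 2 := by
  have hIcc : Set.uIcc (-1:ℝ) 1 = Set.Icc (-1:ℝ) 1 := Set.uIcc_of_le (by norm_num)
  have hcf : ContinuousOn f (Set.Icc (-1:ℝ) 1) := fun x hx =>
    ((hd x hx).continuousAt).continuousWithinAt
  -- continuous extension of f
  set fc : ℝ → ℝ := fun x => f (max (-1) (min 1 x)) with hfcdef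
  have hproj : ∀ x : ℝ, max (-1) (min 1 x) ∈ Set.Icc (-1:ℝ) 1 := by
    intro x
    constructor
    · exact le_max_left _ _
    · exact max_le (by norm_num) (min_le_left _ _)
  have hfc : Continuous fc := by
    rw [hfcdef]
    exact hcf.comp_continuous
      (continuous_const.max (continuous_const.min continuous_id)) hproj
  have hfceq : ∀ x ∈ Set.Icc (-1:ℝ) 1, fc x = f x := by
    intro x hx
    rw [hfcdef]
    simp only
    rw [min_eq_right hx.2, max_eq_right hx.1]
  have havg' : ∫ x in (-1:ℝ)..1, fc x = 0 := by
    rw [intervalIntegral.integral_congr (g := f) (fun x hx => hfceq x (hIcc ▸ hx))]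
    exact havg
  -- bound for fc
  obtain ⟨M0, hM0⟩ := (isCompact_Icc (a := (-1:ℝ)) (b := 1)).exists_bound_of_continuousOn hcf
  have hM : ∀ x, |fc x| ≤ M0 := by
    intro x
    rw [hfcdef]
    simpa using hM0 _ (hproj x)
  -- primitive and Hardy quotient
  set F : ℝ → ℝ := fun x => ∫ t in (-1:ℝ)..x, fc t with hFdef
  set g : ℝ → ℝ := fun x => F x / (1 - x^2) with hgdef'
  have hgdef : ∀ x, g x = F x / (1 - x^2) := fun x => by rw [hgdef']
  have hFb : ∀ x ∈ Set.Icc (-1:ℝ) 1, |F x| ≤ M0 * (1 - x^2) := by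
    rw [hFdef]
    exact Fbound fc hfc havg' hM
  have hFd : ∀ x, HasDerivAt F (fc x) x := by
    intro x
    rw [hFdef]
    exact (hfc.integral_hasStrictDerivAt (-1) x).hasDerivAt
  have hFc : Continuous F := continuous_iff_continuousAt.mpr fun x => (hFd x).continuousAt
  have hden : Continuous fun x : ℝ => 1 - x^2 := continuous_const.sub (continuous_pow 2)
  have hgm : Measurable g := by
    rw [hgdef']
    exact hFc.measurable.div hden.measurable
  have hgb : ∀ x ∈ Set.Icc (-1:ℝ) 1, |g x| ≤ M0 := by
    intro x hx
    have hM00 : 0 ≤ M0 := (abs_nonneg _).trans (hM 0)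
    rcases eq_or_ne (1 - x^2) 0 with h | h
    · rw [hgdef, h, div_zero, abs_zero]; exact hM00
    · have hpos : 0 < 1 - x^2 := by
        rcases lt_or_eq_of_le (by nlinarith [hx.1, hx.2] : (0:ℝ) ≤ 1 - x^2) with h' | h'
        · exact h'
        · exact absurd h'.symm h
      rw [hgdef, abs_div, abs_of_pos hpos, div_le_iff₀ hpos]
      exact hFb x hx
  have hF1 : F 1 = 0 := by rw [hFdef]; exact havg'
  have hFm1 : F (-1) = 0 := by rw [hFdef]; simp
  -- the two Hardy inequalities
  have hH1 := hardy_aux fc hfc havg' hM F g hFdef hgdef hFb 1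
  have hH2 := hardy_aux fc hfc havg' hM F g hFdef hgdef hFb 2
  have hIf : (∫ x in (-1:ℝ)..1, fc x ^ 2) = ∫ x in (-1:ℝ)..1, f x ^ 2 :=
    intervalIntegral.integral_congr (fun x hx => by rw [hfceq x (hIcc ▸ hx)])
  set I : ℝ := ∫ x in (-1:ℝ)..1, f x ^ 2 with hIdef
  have hA0 : (∫ x in (-1:ℝ)..1, g x ^ 2) ≤ I := by
    rw [← hIf]
    calc (∫ x in (-1:ℝ)..1, g x ^ 2)
        = ∫ x in (-1:ℝ)..1, (1*(1+x^2) - 1^2*x^2) * (g x)^2 :=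
          intervalIntegral.integral_congr (fun x _ => by ring)
      _ ≤ _ := hH1
  have hA1 : 2 * (∫ x in (-1:ℝ)..1, (1 - x^2) * g x ^ 2) ≤ I := by
    rw [← hIf]
    calc 2 * (∫ x in (-1:ℝ)..1, (1 - x^2) * g x ^ 2)
        = ∫ x in (-1:ℝ)..1, 2 * ((1 - x^2) * g x ^ 2) := by
          rw [intervalIntegral.integral_const_mul]
      _ = ∫ x in (-1:ℝ)..1, (2*(1+x^2) - 2^2*x^2) * (g x)^2 :=
          intervalIntegral.integral_congr (fun x _ => by ring)
      _ ≤ _ := hH2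
  -- integration by parts : ∫ F f' = - I
  have hibp : (∫ x in (-1:ℝ)..1, F x * f' x) = - I := by
    have hFTC : ∫ x in (-1:ℝ)..1, (f x * f x + F x * f' x) = F 1 * f 1 - F (-1) * f (-1) := by
      refine intervalIntegral.integral_eq_sub_of_hasDerivAt
        (f := fun y => F y * f y) (f' := fun x => f x * f x + F x * f' x) ?_ ?_
      · intro x hx
        have hx' : x ∈ Set.Icc (-1:ℝ) 1 := hIcc ▸ hx
        have h1 : HasDerivAt (fun y => F y * f y) (fc x * f x + F x * f' x) x :=
          (hFd x).mul (hd x hx')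
        rwa [hfceq x hx'] at h1
      · apply ContinuousOn.intervalIntegrable
        rw [hIcc]
        exact (hcf.mul hcf).add (hFc.continuousOn.mul hc)
    rw [hF1, hFm1] at hFTC
    have hsplit : (∫ x in (-1:ℝ)..1, (f x * f x + F x * f' x))
        = (∫ x in (-1:ℝ)..1, f x * f x) + ∫ x in (-1:ℝ)..1, F x * f' x := by
      apply intervalIntegral.integral_add
      · apply ContinuousOn.intervalIntegrable; rw [hIcc]; exact hcf.mul hcf
      · apply ContinuousOn.intervalIntegrable; rw [hIcc]; exact hFc.continuousOn.mul hc
    have hff : (∫ x in (-1:ℝ)..1, f x * f x) = I := by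
      rw [hIdef]
      exact intervalIntegral.integral_congr (fun x _ => by ring)
    rw [hsplit, hff] at hFTC
    simp only [zero_mul, sub_zero] at hFTC
    linarith
  -- pointwise inequality
  set t : ℝ := μ + 2 with htdef
  have hpt : ∀ x ∈ Set.Icc (-1:ℝ) 1,
      -(2*t) * (F x * f' x) - (4*(1-x^2) + μ) * g x ^ 2
        ≤ (1 - x ^ 2) * (1 + μ * (1 - x ^ 2)) * (f' x) ^ 2 := by
    intro x hx
    have hs0 : (0:ℝ) ≤ 1 - x^2 := by nlinarith [hx.1, hx.2]
    rcases eq_or_lt_of_le hs0 with h | h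
    · -- endpoint: 1 - x^2 = 0, so F x = 0
      have hx1 : x = 1 ∨ x = -1 := by
        have : (x - 1) * (x + 1) = 0 := by nlinarith
        rcases mul_eq_zero.mp this with h' | h'
        · left; linarith
        · right; linarith
      have hFx : F x = 0 := by rcases hx1 with h' | h' <;> rw [h'] <;> [exact hF1; exact hFm1]
      rw [hFx, ← h]
      have : (0:ℝ) ≤ (4*0 + μ) * g x ^ 2 := by positivity
      nlinarith
    · have hu : (0:ℝ) < 1 + μ * (1 - x^2) := by nlinarith
      have hw : (0:ℝ) < (1 - x^2) * (1 + μ * (1 - x^2)) := mul_pos h hu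
      have e1 : -(2*t) * (F x * f' x) ≤ (1 - x^2) * (1 + μ * (1 - x^2)) * f' x ^ 2
          + t^2 * (F x ^ 2 / ((1 - x^2) * (1 + μ * (1 - x^2)))) := by
        have h0 : 0 ≤ ((1 - x^2) * (1 + μ * (1 - x^2)) * f' x + t * F x)^2
            / ((1 - x^2) * (1 + μ * (1 - x^2))) := div_nonneg (sq_nonneg _) hw.le
        have he : ((1 - x^2) * (1 + μ * (1 - x^2)) * f' x + t * F x)^2
              / ((1 - x^2) * (1 + μ * (1 - x^2)))
            = (1 - x^2) * (1 + μ * (1 - x^2)) * f' x ^ 2 + 2*t*(F x * f' x)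
              + t^2 * (F x ^2 / ((1 - x^2) * (1 + μ * (1 - x^2)))) := by
          field_simp
          ring
        rw [he] at h0
        linarith only [h0]
      have e2 : t^2 * (F x ^ 2 / ((1 - x^2) * (1 + μ * (1 - x^2))))
          ≤ (4*(1-x^2) + μ) * g x ^ 2 := by
        have hFg : F x = (1 - x^2) * g x := by
          rw [hgdef]
          field_simp
        have hsc := scalar_ineq μ (1 - x^2) hμ hs0
        have he2 : t^2 * (F x ^ 2 / ((1 - x^2) * (1 + μ * (1 - x^2))))
            = (2 + μ)^2 * ((1 - x^2) / (1 + μ * (1 - x^2))) * g x ^ 2 := by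
          rw [hFg, htdef]
          field_simp
          ring
        rw [he2]
        have h2 : (2 + μ)^2 * ((1 - x^2) / (1 + μ * (1 - x^2))) ≤ 4*(1-x^2) + μ := by
          calc (2 + μ)^2 * ((1 - x^2) / (1 + μ * (1 - x^2)))
              ≤ (2 + μ)^2 * ((4*(1-x^2) + μ) / (2 + μ)^2) :=
                mul_le_mul_of_nonneg_left hsc (by positivity)
            _ = 4*(1-x^2) + μ := by field_simp
        exact mul_le_mul_of_nonneg_right h2 (sq_nonneg _)
      exact sub_le_iff_le_add.mpr (e1.trans (add_le_add_right e2 _))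
  -- integrate the pointwise inequality
  have hconst : Continuous (fun x : ℝ => 4*(1-x^2) + μ) :=
    (continuous_const.mul (continuous_const.sub (continuous_pow 2))).add continuous_const
  have hconstb : ∀ x ∈ Set.Icc (-1:ℝ) 1, |4*(1-x^2) + μ| ≤ 4 + μ := by
    intro x hx
    have hs0 : (0:ℝ) ≤ 1 - x^2 := by nlinarith [hx.1, hx.2]
    have : (0:ℝ) ≤ 4*(1-x^2) + μ := by positivity
    rw [abs_of_nonneg this]
    nlinarith [sq_nonneg x]
  have hint4 : MeasureTheory.IntegrableOn (fun x => (4*(1-x^2) + μ) * g x ^ 2)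
      (Set.Ioo (-1:ℝ) 1) MeasureTheory.volume :=
    intOn g hgm hgb _ hconst hconstb
  have hII4 : IntervalIntegrable (fun x => (4*(1-x^2) + μ) * g x ^ 2)
      MeasureTheory.volume (-1) 1 := intervalInt_of_Ioo hint4
  have hIIF : IntervalIntegrable (fun x => -(2*t) * (F x * f' x)) MeasureTheory.volume (-1) 1 := by
    apply ContinuousOn.intervalIntegrable
    rw [hIcc]
    exact (continuous_const.continuousOn).mul (hFc.continuousOn.mul hc)
  have hmain : (∫ x in (-1:ℝ)..1, (-(2*t) * (F x * f' x) - (4*(1-x^2) + μ) * g x ^ 2))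
      ≤ ∫ x in (-1:ℝ)..1, (1 - x ^ 2) * (1 + μ * (1 - x ^ 2)) * (f' x) ^ 2 := by
    apply intervalIntegral.integral_mono_on (by norm_num)
    · exact hIIF.sub hII4
    · apply ContinuousOn.intervalIntegrable
      rw [hIcc]
      exact (hden.continuousOn.mul (continuous_const.add (continuous_const.mul (continuous_const.sub (continuous_pow 2)))).continuousOn).mul (hc.pow 2)
    · exact hpt
  -- split the left side
  have hsplit2 : (∫ x in (-1:ℝ)..1, (-(2*t) * (F x * f' x) - (4*(1-x^2) + μ) * g x ^ 2))
      = -(2*t) * (∫ x in (-1:ℝ)..1, F x * f' x)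
        - ∫ x in (-1:ℝ)..1, (4*(1-x^2) + μ) * g x ^ 2 := by
    rw [intervalIntegral.integral_sub hIIF hII4, intervalIntegral.integral_const_mul]
  have hsplit3 : (∫ x in (-1:ℝ)..1, (4*(1-x^2) + μ) * g x ^ 2)
      = 4 * (∫ x in (-1:ℝ)..1, (1-x^2) * g x ^ 2) + μ * ∫ x in (-1:ℝ)..1, g x ^ 2 := by
    have i1 : MeasureTheory.IntegrableOn (fun x => (1-x^2) * g x ^ 2)
        (Set.Ioo (-1:ℝ) 1) MeasureTheory.volume :=
      intOn g hgm hgb _ hden (C := 1) (fun x hx => by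
        have hs0 : (0:ℝ) ≤ 1 - x^2 := by nlinarith [hx.1, hx.2]
        rw [abs_of_nonneg hs0]; nlinarith [sq_nonneg x])
    have i0 : MeasureTheory.IntegrableOn (fun x => g x ^ 2)
        (Set.Ioo (-1:ℝ) 1) MeasureTheory.volume := by
      have := intOn g hgm hgb (fun _ => 1) continuous_const
        (C := 1) (fun x _ => by norm_num)
      simpa using this
    have e : ∀ x : ℝ, (4*(1-x^2) + μ) * g x ^ 2
        = 4 * ((1-x^2) * g x ^ 2) + μ * g x ^ 2 := fun x => by ring
    calc (∫ x in (-1:ℝ)..1, (4*(1-x^2) + μ) * g x ^ 2)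
        = ∫ x in (-1:ℝ)..1, (4 * ((1-x^2) * g x ^ 2) + μ * g x ^ 2) :=
          intervalIntegral.integral_congr (fun x _ => e x)
      _ = (∫ x in (-1:ℝ)..1, 4 * ((1-x^2) * g x ^ 2)) + ∫ x in (-1:ℝ)..1, μ * g x ^ 2 :=
          intervalIntegral.integral_add
            ((intervalInt_of_Ioo i1).const_mul 4) ((intervalInt_of_Ioo i0).const_mul μ)
      _ = _ := by rw [intervalIntegral.integral_const_mul, intervalIntegral.integral_const_mul]
  rw [hsplit2, hibp, hsplit3] at hmain
  rw [ge_iff_le]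
  have hμ2 : (0:ℝ) < μ := hμ
  have e0 : (∫ x in (-1:ℝ)..1, g x ^ 2) ≤ I := hA0
  have e1 : 2 * (∫ x in (-1:ℝ)..1, (1-x^2) * g x ^ 2) ≤ I := hA1
  have e0' : μ * (∫ x in (-1:ℝ)..1, g x ^ 2) ≤ μ * I :=
    mul_le_mul_of_nonneg_left e0 hμ2.le
  rw [htdef] at hmain ⊢
  linarith only [hmain, e1, e0']
end

section
/- For every continuously differentiable f on [-1,1] with ∫₋₁¹ f = 0 and every ρ > 0, ∫₋₁¹ [(1-x²) + ρ(1-x²)³](f'(x))² dx ≥ √(4 + 2ρ) · ∫₋₁¹ f(x)² dx. -/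
open Set MeasureTheory intervalIntegral

section helpers
lemma bdd_intervalIntegrable (h : ℝ → ℝ) (C : ℝ)
    (hcont : ContinuousOn h (Set.Ioo (-1:ℝ) 1))
    (hb : ∀ x ∈ Set.Ioo (-1:ℝ) 1, |h x| ≤ C) :
    IntervalIntegrable h MeasureTheory.volume (-1) 1 := by
  rw [intervalIntegrable_iff_integrableOn_Ioo_of_le (by norm_num : (-1:ℝ) ≤ 1)]
  refine Integrable.mono' (g := fun _ => C) ?_ ?_ ?_
  · exact integrableOn_const measure_Ioo_lt_top.ne enorm_ne_top
  · exact hcont.aestronglyMeasurable measurableSet_Ioo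
  · exact (ae_restrict_iff' measurableSet_Ioo).2 (Filter.Eventually.of_forall fun x hx => by
      simpa [Real.norm_eq_abs] using hb x hx)
end helpers

set_option maxHeartbeats 1000000 in
lemma hardy_key (f g : ℝ → ℝ) (M c : ℝ)
    (hc1 : 1 ≤ c) (hc2 : c ≤ 2)
    (hgc : ContinuousOn g (Set.Icc (-1:ℝ) 1))
    (hgd : ∀ x ∈ Set.Ioo (-1:ℝ) 1, HasDerivAt g (f x) x)
    (hfc : ContinuousOn f (Set.Icc (-1:ℝ) 1))
    (hfb : ∀ x ∈ Set.Icc (-1:ℝ) 1, |f x| ≤ M)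
    (hgb : ∀ x ∈ Set.Icc (-1:ℝ) 1, |g x| ≤ M * (1 - x^2)) :
    ∫ x in (-1:ℝ)..1, ((c - (c^2-c)*x^2)/(1-x^2)^2) * (g x)^2 ≤
      ∫ x in (-1:ℝ)..1, (f x)^2 := by
  have hM : 0 ≤ M := le_trans (abs_nonneg _) (hfb 0 (by norm_num))
  set U : ℝ → ℝ := fun x => -(c*x) * (g x)^2 / (1-x^2) with hU
  set u' : ℝ → ℝ := fun x =>
      (-(c*(1+x^2))/(1-x^2)^2) * (g x)^2 + (-(2*c*x)/(1-x^2)) * ((g x) * (f x)) with hu'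
  -- squared bound on g
  have hg2 : ∀ x ∈ Set.Icc (-1:ℝ) 1, (g x)^2 ≤ M^2 * (1-x^2)^2 := by
    intro x hx
    have h1 := hgb x hx
    have h2 : |g x|^2 ≤ (M*(1-x^2))^2 :=
      pow_le_pow_left₀ (abs_nonneg _) h1 2
    rw [sq_abs] at h2
    nlinarith [h2]
  -- bound on U
  have hUb : ∀ y ∈ Set.Icc (-1:ℝ) 1, |U y| ≤ 2*M^2*(1-y^2) := by
    intro y hy
    rcases eq_or_ne ((1:ℝ)-y^2) 0 with h|h
    · have : U y = 0 := by simp [hU, h]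
      rw [this, h, abs_zero]
      norm_num
    · have ht : 0 < 1 - y^2 := lt_of_le_of_ne (by nlinarith [hy.1, hy.2]) (Ne.symm h)
      have hgy := hg2 y hy
      rw [hU]
      rw [abs_div, abs_of_pos ht, div_le_iff₀ ht]
      have habs : |(-(c*y)) * (g y)^2| = |c*y| * (g y)^2 := by
        rw [abs_mul, abs_neg, abs_of_nonneg (sq_nonneg (g y))]
      rw [habs]
      have hy1 : |c*y| ≤ c := by
        rw [abs_mul, abs_of_nonneg (by linarith : (0:ℝ) ≤ c)]
        have : |y| ≤ 1 := abs_le.2 ⟨hy.1, hy.2⟩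
        nlinarith [this, abs_nonneg y]
      nlinarith [sq_nonneg (g y), abs_nonneg (c*y), sq_nonneg (1-y^2), sq_nonneg M]
  -- continuity of U on Icc
  have hUcont : ContinuousOn U (Set.Icc (-1:ℝ) 1) := by
    intro x hx
    rcases eq_or_ne ((1:ℝ)-x^2) 0 with h|h
    · -- endpoint: squeeze to 0
      have hU0 : U x = 0 := by simp [hU, h]
      rw [ContinuousWithinAt, hU0]
      apply squeeze_zero_norm' (a := fun y => 2*M^2*(1-y^2))
      · exact Filter.eventually_iff_exists_mem.2 ⟨Set.Icc (-1:ℝ) 1,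
          self_mem_nhdsWithin, fun y hy => by simpa [Real.norm_eq_abs] using hUb y hy⟩
      · have : Filter.Tendsto (fun y : ℝ => 2*M^2*(1-y^2)) (nhds x)
            (nhds (2*M^2*(1-x^2))) :=
          ((continuous_const.mul (continuous_const.sub (continuous_pow 2))).tendsto x)
        rw [h] at this
        simpa using this.mono_left nhdsWithin_le_nhds
    · have hgx := hgc x hx
      exact (((continuous_const.mul continuous_id).neg.continuousWithinAt.mul
        (hgx.pow 2)).div ((continuous_const.sub (continuous_pow 2)).continuousWithinAt) h)
  -- derivative of U
  have hUderiv : ∀ x ∈ Set.Ioo (-1:ℝ) 1, HasDerivAt U (u' x) x := by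
    intro x hx
    have ht : 0 < 1 - x^2 := by nlinarith [hx.1, hx.2]
    have htne : (1:ℝ) - x^2 ≠ 0 := ht.ne'
    have hgx := hgd x hx
    have hnum : HasDerivAt (fun y => -(c*y) * (g y)^2)
        (-c * (g x)^2 + -(c*x) * (2 * (g x)^1 * f x)) x := by
      have h1 : HasDerivAt (fun y : ℝ => -(c*y)) (-c) x := by
        simpa using ((hasDerivAt_id x).const_mul (-c))
      have h2 : HasDerivAt (fun y => (g y)^2) (2 * (g x)^1 * f x) x := by
        simpa using hgx.fun_pow 2
      simpa using h1.fun_mul h2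
    have hden : HasDerivAt (fun y : ℝ => 1 - y^2) (-(2*x)) x := by
      simpa using ((hasDerivAt_pow 2 x).const_sub 1)
    have := hnum.fun_div hden htne
    refine this.congr_deriv ?_
    rw [hu']
    field_simp
    ring
  -- integrability of u'
  have hint_u' : IntervalIntegrable u' MeasureTheory.volume (-1) 1 := by
    apply bdd_intervalIntegrable u' (8*M^2)
    · apply ContinuousOn.add
      · apply ContinuousOn.mul
        · apply ContinuousOn.div
          · fun_prop
          · fun_prop
          · intro x hx
            have : 0 < 1 - x^2 := by nlinarith [hx.1, hx.2]
            positivity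
        · exact ((hgc.mono Set.Ioo_subset_Icc_self).pow 2)
      · apply ContinuousOn.mul
        · apply ContinuousOn.div
          · fun_prop
          · fun_prop
          · intro x hx
            have : 0 < 1 - x^2 := by nlinarith [hx.1, hx.2]
            exact this.ne'
        · exact (hgc.mono Set.Ioo_subset_Icc_self).mul (hfc.mono Set.Ioo_subset_Icc_self)
    · intro x hx
      have ht : 0 < 1 - x^2 := by nlinarith [hx.1, hx.2]
      have hx1 : |x| ≤ 1 := abs_le.2 ⟨hx.1.le, hx.2.le⟩
      have hgx := hg2 x (Set.Ioo_subset_Icc_self hx)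
      have hfx := hfb x (Set.Ioo_subset_Icc_self hx)
      have hgax : |g x| ≤ M * (1-x^2) := hgb x (Set.Ioo_subset_Icc_self hx)
      rw [hu']
      have h1 : |(-(c*(1+x^2))/(1-x^2)^2) * (g x)^2| ≤ 4*M^2 := by
        have hA : |(-(c*(1+x^2))/(1-x^2)^2)| = (c*(1+x^2))/(1-x^2)^2 := by
          rw [abs_div, abs_neg, abs_of_nonneg (by nlinarith : (0:ℝ) ≤ c*(1+x^2)),
            abs_of_nonneg (sq_nonneg (1-x^2))]
        rw [abs_mul, hA, abs_of_nonneg (sq_nonneg (g x)), div_mul_eq_mul_div,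
          div_le_iff₀ (by positivity : (0:ℝ) < (1-x^2)^2)]
        have e0 : c*(1+x^2) ≤ 4 := by nlinarith [sq_nonneg x]
        nlinarith [e0, hgx, sq_nonneg (g x)]
      have h2 : |(-(2*c*x)/(1-x^2)) * ((g x)*(f x))| ≤ 4*M^2 := by
        have hA : |(-(2*c*x)/(1-x^2))| = |2*c*x|/(1-x^2) := by
          rw [abs_div, abs_neg, abs_of_pos ht]
        rw [abs_mul, hA, abs_mul (g x) (f x), div_mul_eq_mul_div, div_le_iff₀ ht]
        have e1 : |2*c*x| ≤ 4 := by
          rw [abs_mul, abs_of_nonneg (by linarith : (0:ℝ) ≤ 2*c)]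
          nlinarith [abs_nonneg x]
        have e2 : |g x| * |f x| ≤ (M*(1-x^2)) * M :=
          mul_le_mul hgax hfx (abs_nonneg _) (by positivity)
        calc |2*c*x| * (|g x| * |f x|) ≤ 4 * ((M*(1-x^2))*M) := by
              apply mul_le_mul e1 e2 (by positivity) (by norm_num)
          _ ≤ 4*M^2 * (1-x^2) := by nlinarith
          _ = 4*M^2*(1-x^2) := by ring
      calc |u' x| ≤ |(-(c*(1+x^2))/(1-x^2)^2) * (g x)^2| +
            |(-(2*c*x)/(1-x^2)) * ((g x)*(f x))| := abs_add_le _ _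
        _ ≤ 8*M^2 := by linarith
  -- FTC
  have hFTC : ∫ x in (-1:ℝ)..1, u' x = 0 := by
    rw [intervalIntegral.integral_eq_sub_of_hasDeriv_right_of_le (by norm_num) hUcont
      (fun x hx => (hUderiv x hx).hasDerivWithinAt) hint_u']
    norm_num [hU]
  -- integrability of the weighted term
  have hint_V : IntervalIntegrable
      (fun x => ((c - (c^2-c)*x^2)/(1-x^2)^2) * (g x)^2) MeasureTheory.volume (-1) 1 := by
    apply bdd_intervalIntegrable _ (2*M^2)
    · apply ContinuousOn.mul
      · apply ContinuousOn.div
        · fun_prop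
        · fun_prop
        · intro x hx
          have : 0 < 1 - x^2 := by nlinarith [hx.1, hx.2]
          positivity
      · exact ((hgc.mono Set.Ioo_subset_Icc_self).pow 2)
    · intro x hx
      have ht : 0 < 1 - x^2 := by nlinarith [hx.1, hx.2]
      have hx2 : x^2 ≤ 1 := by nlinarith [hx.1, hx.2]
      have hgx := hg2 x (Set.Ioo_subset_Icc_self hx)
      have hnum0 : 0 ≤ c - (c^2-c)*x^2 := by nlinarith [sq_nonneg x]
      have hnum2 : c - (c^2-c)*x^2 ≤ 2 := by nlinarith [sq_nonneg x, sq_nonneg (c-1)]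
      have hA : |(c - (c^2-c)*x^2)/(1-x^2)^2| = (c - (c^2-c)*x^2)/(1-x^2)^2 := by
        rw [abs_div, abs_of_nonneg hnum0, abs_of_nonneg (sq_nonneg (1-x^2))]
      rw [abs_mul, hA, abs_of_nonneg (sq_nonneg (g x)), div_mul_eq_mul_div,
        div_le_iff₀ (by positivity : (0:ℝ) < (1-x^2)^2)]
      nlinarith [sq_nonneg (g x), mul_nonneg (sq_nonneg M) (sq_nonneg (1-x^2))]
  have hint_f2 : IntervalIntegrable (fun x => (f x)^2) MeasureTheory.volume (-1) 1 := by
    apply ContinuousOn.intervalIntegrable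
    rw [Set.uIcc_of_le (by norm_num : (-1:ℝ) ≤ 1)]
    exact hfc.pow 2
  -- pointwise inequality
  have hptwise : ∀ x ∈ Set.Icc (-1:ℝ) 1,
      u' x + ((c - (c^2-c)*x^2)/(1-x^2)^2) * (g x)^2 ≤ (f x)^2 := by
    intro x hx
    rcases eq_or_ne ((1:ℝ)-x^2) 0 with h|h
    · simp [hu', h]
      positivity
    · have key : (f x)^2 - (u' x + ((c - (c^2-c)*x^2)/(1-x^2)^2) * (g x)^2)
          = (((1-x^2)*(f x) + c*x*(g x))/(1-x^2))^2 := by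
        rw [hu']
        field_simp
        ring
      nlinarith [sq_nonneg (((1-x^2)*(f x) + c*x*(g x))/(1-x^2)), key]
  have hmono : ∫ x in (-1:ℝ)..1, (u' x + ((c - (c^2-c)*x^2)/(1-x^2)^2) * (g x)^2)
      ≤ ∫ x in (-1:ℝ)..1, (f x)^2 :=
    intervalIntegral.integral_mono_on (by norm_num) (hint_u'.add hint_V) hint_f2 hptwise
  rw [intervalIntegral.integral_add hint_u' hint_V, hFTC] at hmono
  linarith

set_option maxHeartbeats 1000000 in
theorem stmt_9 (f f' : ℝ → ℝ)
    (hd : ∀ x ∈ Set.Icc (-1:ℝ) 1, HasDerivAt f (f' x) x)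
    (hc : ContinuousOn f' (Set.Icc (-1:ℝ) 1))
    (havg : ∫ x in (-1:ℝ)..1, f x = 0) (ρ : ℝ) (hρ : ρ > 0) :
    ∫ x in (-1:ℝ)..1, ((1 - x ^ 2) + ρ * (1 - x ^ 2) ^ 3) * (f' x) ^ 2 ≥
      Real.sqrt (4 + 2 * ρ) * ∫ x in (-1:ℝ)..1, (f x) ^ 2 := by
  have hfc : ContinuousOn f (Set.Icc (-1:ℝ) 1) :=
    fun x hx => ((hd x hx).continuousAt).continuousWithinAt
  obtain ⟨M, hMb'⟩ := (isCompact_Icc : IsCompact (Set.Icc (-1:ℝ) 1)).exists_bound_of_continuousOn hfc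
  have hMb : ∀ x ∈ Set.Icc (-1:ℝ) 1, |f x| ≤ M := fun x hx => by
    simpa [Real.norm_eq_abs] using hMb' x hx
  have hM0 : 0 ≤ M := le_trans (abs_nonneg _) (hMb 0 (by norm_num))
  set g : ℝ → ℝ := fun x => ∫ t in (-1:ℝ)..x, f t with hgdef
  have hfint : ∀ a b, a ∈ Set.Icc (-1:ℝ) 1 → b ∈ Set.Icc (-1:ℝ) 1 →
      IntervalIntegrable f MeasureTheory.volume a b := by
    intro a b ha hb
    apply ContinuousOn.intervalIntegrable
    exact hfc.mono (Set.uIcc_subset_Icc ha hb)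
  have hg1 : g 1 = 0 := havg
  have hgm1 : g (-1) = 0 := intervalIntegral.integral_same
  have hgc : ContinuousOn g (Set.Icc (-1:ℝ) 1) := by
    have h1 : IntegrableOn f (Set.uIcc (-1:ℝ) 1) MeasureTheory.volume := by
      rw [Set.uIcc_of_le (by norm_num : (-1:ℝ) ≤ 1)]
      exact hfc.integrableOn_compact isCompact_Icc
    have := intervalIntegral.continuousOn_primitive_interval h1
    rwa [Set.uIcc_of_le (by norm_num : (-1:ℝ) ≤ 1)] at this
  have hgd : ∀ x ∈ Set.Ioo (-1:ℝ) 1, HasDerivAt g (f x) x := by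
    intro x hx
    have hxI : x ∈ Set.Icc (-1:ℝ) 1 := Set.Ioo_subset_Icc_self hx
    exact intervalIntegral.integral_hasDerivAt_right
      (hfint (-1) x (by norm_num) hxI)
      (ContinuousOn.stronglyMeasurableAtFilter isOpen_Ioo
        (fun y hy => ((hd y (Set.Ioo_subset_Icc_self hy)).continuousAt).continuousWithinAt) x hx)
      ((hd x hxI).continuousAt)
  -- bounds on g
  have hgb : ∀ x ∈ Set.Icc (-1:ℝ) 1, |g x| ≤ M * (1 - x^2) := by
    intro x hx
    have hb1 : |g x| ≤ M * (x+1) := by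
      have := intervalIntegral.norm_integral_le_of_norm_le_const
        (C := M) (f := f) (a := (-1:ℝ)) (b := x) ?_
      · rw [Real.norm_eq_abs] at this
        calc |g x| ≤ M * |x - (-1)| := this
          _ = M * (x+1) := by rw [abs_of_nonneg (by linarith [hx.1])]; ring
      · intro y hy
        rw [Set.uIoc_of_le (by linarith [hx.1])] at hy
        exact hMb' y ⟨by linarith [hy.1], by linarith [hy.2, hx.2]⟩
    have hb2 : |g x| ≤ M * (1-x) := by
      have hsplit : g x + ∫ t in x..(1:ℝ), f t = ∫ t in (-1:ℝ)..1, f t :=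
        intervalIntegral.integral_add_adjacent_intervals
          (hfint (-1) x (by norm_num) hx) (hfint x 1 hx (by norm_num))
      rw [havg] at hsplit
      have hgx : g x = - ∫ t in x..(1:ℝ), f t := by linarith
      rw [hgx, abs_neg]
      have := intervalIntegral.norm_integral_le_of_norm_le_const
        (C := M) (f := f) (a := x) (b := (1:ℝ)) ?_
      · rw [Real.norm_eq_abs] at this
        calc |∫ t in x..(1:ℝ), f t| ≤ M * |1 - x| := this
          _ = M * (1-x) := by rw [abs_of_nonneg (by linarith [hx.2])]
      · intro y hy
        rw [Set.uIoc_of_le (by linarith [hx.2])] at hy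
        exact hMb' y ⟨by linarith [hy.1, hx.1], hy.2⟩
    rcases le_total 0 x with h0|h0
    · have : M*(1-x) ≤ M*(1-x^2) := by
        nlinarith [mul_nonneg (mul_nonneg hM0 h0) (by linarith [hx.2] : (0:ℝ) ≤ 1 - x)]
      linarith
    · have : M*(x+1) ≤ M*(1-x^2) := by
        nlinarith [mul_nonneg (mul_nonneg hM0 (by linarith [hx.1] : (0:ℝ) ≤ 1 + x))
          (by linarith : (0:ℝ) ≤ -x)]
      linarith
  have hg2 : ∀ x ∈ Set.Icc (-1:ℝ) 1, (g x)^2 ≤ M^2 * (1-x^2)^2 := by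
    intro x hx
    have h1 := hgb x hx
    have h2 : |g x|^2 ≤ (M*(1-x^2))^2 := pow_le_pow_left₀ (abs_nonneg _) h1 2
    rw [sq_abs] at h2
    nlinarith [h2]
  -- the two Hardy-type inequalities (need hardy_key lemma; assume for now)
  have key2 : ∫ x in (-1:ℝ)..1, (((2:ℝ) - (2^2-2)*x^2)/(1-x^2)^2) * (g x)^2 ≤
      ∫ x in (-1:ℝ)..1, (f x)^2 :=
    hardy_key f g M 2 (by norm_num) (by norm_num) hgc hgd hfc hMb hgb
  have key1 : ∫ x in (-1:ℝ)..1, (((1:ℝ) - (1^2-1)*x^2)/(1-x^2)^2) * (g x)^2 ≤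
      ∫ x in (-1:ℝ)..1, (f x)^2 :=
    hardy_key f g M 1 (by norm_num) (by norm_num) hgc hgd hfc hMb hgb
  set lam : ℝ := Real.sqrt (4 + 2*ρ) with hlam
  have hlsq : lam^2 = 4 + 2*ρ := Real.sq_sqrt (by linarith)
  have hl2 : 2 ≤ lam := by
    have : Real.sqrt 4 ≤ lam := Real.sqrt_le_sqrt (by linarith)
    rwa [show (4:ℝ) = 2^2 by norm_num, Real.sqrt_sq (by norm_num : (0:ℝ) ≤ 2)] at this
  have hl0 : 0 < lam := by linarith
  -- choice of α β
  obtain ⟨α, β, hα, hβ, hsum, hline⟩ : ∃ α β : ℝ, 0 ≤ α ∧ 0 ≤ β ∧ lam*(α/2+β) ≤ 1 ∧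
      ∀ t : ℝ, 0 < t → t ≤ 1 → t ≤ (α*t+β)*(1+ρ*t^2) := by
    rcases le_total ρ 4 with hρ4|hρ4
    · refine ⟨(16-4*ρ)/(4+ρ)^2, 4*ρ/(4+ρ)^2, ?_, ?_, ?_, ?_⟩
      · apply div_nonneg (by linarith) (by positivity)
      · positivity
      · have h4 : (0:ℝ) < (4+ρ)^2 := by positivity
        have e : (16-4*ρ)/(4+ρ)^2/2 + 4*ρ/(4+ρ)^2 = (8+2*ρ)/(4+ρ)^2 := by
          field_simp; ring
        rw [e, mul_div_assoc' lam _ _, div_le_one h4]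
        nlinarith [sq_nonneg (2*lam - (4+ρ)), hlsq, sq_nonneg ρ, hρ.le, hl0.le]
      · intro t ht0 ht1
        have h4 : (0:ℝ) < (4+ρ)^2 := by positivity
        rw [← sub_nonneg]
        have e : ((16-4*ρ)/(4+ρ)^2*t + 4*ρ/(4+ρ)^2)*(1+ρ*t^2) - t
            = (ρ*((2*t-1)^2*((4-ρ)*t+4)))/(4+ρ)^2 := by
          field_simp; ring
        rw [e]
        apply div_nonneg _ h4.le
        apply mul_nonneg hρ.le
        apply mul_nonneg (sq_nonneg _)
        nlinarith [mul_nonneg (by linarith : (0:ℝ) ≤ 4-ρ) ht0.le]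
    · refine ⟨0, 1/lam, le_refl _, by positivity, ?_, ?_⟩
      · rw [show (0:ℝ)/2 + 1/lam = 1/lam by ring]
        rw [mul_one_div, div_le_one hl0]
      · intro t ht0 ht1
        have key : (lam*t)^2 ≤ (1+ρ*t^2)^2 := by
          have hr16 : 16 ≤ ρ^2 := by nlinarith
          nlinarith [hlsq, sq_nonneg (1-2*t^2), mul_nonneg (by nlinarith : (0:ℝ) ≤ ρ^2-16)
            (pow_nonneg ht0.le 4), pow_nonneg ht0.le 4]
        have hlt : lam*t ≤ 1+ρ*t^2 := by
          by_contra hcon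
          push_neg at hcon
          have h1 : 0 < 1+ρ*t^2 := by positivity
          have : (1+ρ*t^2)^2 < (lam*t)^2 := by nlinarith
          linarith
        rw [← sub_nonneg]
        have e : (0*t + 1/lam)*(1+ρ*t^2) - t = ((1+ρ*t^2) - lam*t)/lam := by
          field_simp
          ring
        rw [e]
        apply div_nonneg (by linarith) hl0.le
  -- pointwise bound on g^2/w
  have hptw1 : ∀ x ∈ Set.Icc (-1:ℝ) 1, (g x)^2 / ((1 - x^2) + ρ*(1 - x^2)^3)
      ≤ (α/2) * ((((2:ℝ) - (2^2-2)*x^2)/(1-x^2)^2) * (g x)^2)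
        + β * ((((1:ℝ) - (1^2-1)*x^2)/(1-x^2)^2) * (g x)^2) := by
    intro x hx
    rcases eq_or_ne ((1:ℝ)-x^2) 0 with h|h
    · simp [h]
    · have ht : 0 < 1-x^2 := lt_of_le_of_ne (by nlinarith [hx.1, hx.2]) (Ne.symm h)
      have ht1 : 1-x^2 ≤ 1 := by nlinarith [sq_nonneg x]
      have hl := hline (1-x^2) ht ht1
      rw [← sub_nonneg]
      have e : (α/2) * ((((2:ℝ) - (2^2-2)*x^2)/(1-x^2)^2) * (g x)^2)
          + β * ((((1:ℝ) - (1^2-1)*x^2)/(1-x^2)^2) * (g x)^2)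
          - (g x)^2 / ((1 - x^2) + ρ*(1 - x^2)^3)
          = (g x)^2 * (((α*(1-x^2)+β)*(1+ρ*(1-x^2)^2) - (1-x^2))
              / ((1-x^2)^2 * (1+ρ*(1-x^2)^2))) := by
        have hw : (1 - x^2) + ρ*(1 - x^2)^3 ≠ 0 := by positivity
        field_simp
        ring
      rw [e]
      apply mul_nonneg (sq_nonneg _)
      apply div_nonneg (by linarith) (by positivity)
  -- integrability facts
  have hintW : IntervalIntegrable (fun x => (g x)^2 / ((1 - x^2) + ρ*(1 - x^2)^3))
      MeasureTheory.volume (-1) 1 := by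
    apply bdd_intervalIntegrable _ (M^2)
    · apply ContinuousOn.div
      · exact (hgc.mono Set.Ioo_subset_Icc_self).pow 2
      · fun_prop
      · intro x hx
        have ht : 0 < 1-x^2 := by nlinarith [hx.1, hx.2]
        positivity
    · intro x hx
      have ht : 0 < 1-x^2 := by nlinarith [hx.1, hx.2]
      have ht1 : 1-x^2 ≤ 1 := by nlinarith [sq_nonneg x]
      have hw : 0 < (1 - x^2) + ρ*(1 - x^2)^3 := by positivity
      have hgx := hg2 x (Set.Ioo_subset_Icc_self hx)
      rw [abs_of_nonneg (div_nonneg (sq_nonneg _) hw.le), div_le_iff₀ hw]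
      have e1 : M^2*(1-x^2)^2 ≤ M^2*(1-x^2) := by
        nlinarith [mul_nonneg (sq_nonneg M) (mul_nonneg ht.le (by linarith : (0:ℝ) ≤ 1-(1-x^2)))]
      nlinarith [mul_nonneg (mul_nonneg (sq_nonneg M) hρ.le) (pow_nonneg ht.le 3)]
  have hintV : ∀ c : ℝ, 1 ≤ c → c ≤ 2 → IntervalIntegrable
      (fun x => ((c - (c^2-c)*x^2)/(1-x^2)^2) * (g x)^2) MeasureTheory.volume (-1) 1 := by
    intro c hc1 hc2
    apply bdd_intervalIntegrable _ (2*M^2)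
    · apply ContinuousOn.mul
      · apply ContinuousOn.div
        · fun_prop
        · fun_prop
        · intro x hx
          have : 0 < 1 - x^2 := by nlinarith [hx.1, hx.2]
          positivity
      · exact ((hgc.mono Set.Ioo_subset_Icc_self).pow 2)
    · intro x hx
      have ht : 0 < 1 - x^2 := by nlinarith [hx.1, hx.2]
      have hx2 : x^2 ≤ 1 := by nlinarith [hx.1, hx.2]
      have hgx := hg2 x (Set.Ioo_subset_Icc_self hx)
      have hnum0 : 0 ≤ c - (c^2-c)*x^2 := by nlinarith [sq_nonneg x]
      have hnum2 : c - (c^2-c)*x^2 ≤ 2 := by nlinarith [sq_nonneg x, sq_nonneg (c-1)]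
      have hA : |(c - (c^2-c)*x^2)/(1-x^2)^2| = (c - (c^2-c)*x^2)/(1-x^2)^2 := by
        rw [abs_div, abs_of_nonneg hnum0, abs_of_nonneg (sq_nonneg (1-x^2))]
      rw [abs_mul, hA, abs_of_nonneg (sq_nonneg (g x)), div_mul_eq_mul_div,
        div_le_iff₀ (by positivity : (0:ℝ) < (1-x^2)^2)]
      nlinarith [sq_nonneg (g x), mul_nonneg (sq_nonneg M) (sq_nonneg (1-x^2))]
  have hintf2 : IntervalIntegrable (fun x => (f x)^2) MeasureTheory.volume (-1) 1 := by
    apply ContinuousOn.intervalIntegrable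
    rw [Set.uIcc_of_le (by norm_num : (-1:ℝ) ≤ 1)]
    exact hfc.pow 2
  have hintgf : IntervalIntegrable (fun x => g x * f' x) MeasureTheory.volume (-1) 1 := by
    apply ContinuousOn.intervalIntegrable
    rw [Set.uIcc_of_le (by norm_num : (-1:ℝ) ≤ 1)]
    exact hgc.mul hc
  have hintwf2 : IntervalIntegrable (fun x => ((1 - x^2) + ρ*(1 - x^2)^3) * (f' x)^2)
      MeasureTheory.volume (-1) 1 := by
    apply ContinuousOn.intervalIntegrable
    rw [Set.uIcc_of_le (by norm_num : (-1:ℝ) ≤ 1)]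
    exact (Continuous.continuousOn (by fun_prop)).mul (hc.pow 2)
  -- integration by parts
  have hIBP : (∫ x in (-1:ℝ)..1, g x * f' x) = - ∫ x in (-1:ℝ)..1, (f x)^2 := by
    have hP : ∀ x ∈ Set.Ioo (-1:ℝ) 1,
        HasDerivWithinAt (fun y => g y * f y) ((f x)^2 + g x * f' x) (Set.Ioi x) x := by
      intro x hx
      have h1 : HasDerivAt (fun y => g y * f y) (f x * f x + g x * f' x) x :=
        (hgd x hx).mul (hd x (Set.Ioo_subset_Icc_self hx))
      have : HasDerivAt (fun y => g y * f y) ((f x)^2 + g x * f' x) x := by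
        convert h1 using 1; ring
      exact this.hasDerivWithinAt
    have hftc := intervalIntegral.integral_eq_sub_of_hasDeriv_right_of_le
      (by norm_num : (-1:ℝ) ≤ 1) (hgc.fun_mul hfc) hP (hintf2.add hintgf)
    rw [hg1, hgm1] at hftc
    rw [intervalIntegral.integral_add hintf2 hintgf] at hftc
    simp at hftc
    linarith
  -- pointwise AM-GM
  have hptw2 : ∀ x ∈ Set.Icc (-1:ℝ) 1, -(g x * f' x) ≤
      (lam/2) * ((g x)^2 / ((1 - x^2) + ρ*(1 - x^2)^3))
      + (1/(2*lam)) * (((1 - x^2) + ρ*(1 - x^2)^3) * (f' x)^2) := by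
    intro x hx
    rcases eq_or_ne ((1:ℝ)-x^2) 0 with h|h
    · have hg0 : g x = 0 := by
        have := hgb x hx
        rw [h, mul_zero] at this
        exact abs_eq_zero.1 (le_antisymm this (abs_nonneg _))
      simp [h, hg0]
    · have ht : 0 < 1-x^2 := lt_of_le_of_ne (by nlinarith [hx.1, hx.2]) (Ne.symm h)
      have hw : 0 < (1 - x^2) + ρ*(1 - x^2)^3 := by positivity
      have e : (lam/2) * ((g x)^2 / ((1 - x^2) + ρ*(1 - x^2)^3))
          + (1/(2*lam)) * (((1 - x^2) + ρ*(1 - x^2)^3) * (f' x)^2) + (g x * f' x)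
          = (lam * g x + ((1 - x^2) + ρ*(1 - x^2)^3) * f' x)^2
              / (2*lam*((1 - x^2) + ρ*(1 - x^2)^3)) := by
        field_simp
        ring
      have hpos := div_nonneg (sq_nonneg (lam * g x + ((1 - x^2) + ρ*(1 - x^2)^3) * f' x))
        (by positivity : (0:ℝ) ≤ 2*lam*((1 - x^2) + ρ*(1 - x^2)^3))
      linarith [e ▸ hpos]
  -- assemble
  set D : ℝ := ∫ x in (-1:ℝ)..1, (f x)^2 with hD
  have hD0 : 0 ≤ D := by
    apply intervalIntegral.integral_nonneg (by norm_num : (-1:ℝ) ≤ 1)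
    intro u hu; positivity
  set I : ℝ := ∫ x in (-1:ℝ)..1, ((1 - x^2) + ρ*(1 - x^2)^3) * (f' x)^2 with hI
  set X : ℝ := ∫ x in (-1:ℝ)..1, (g x)^2 / ((1 - x^2) + ρ*(1 - x^2)^3) with hX
  -- X ≤ (α/2+β) D
  have hXle : X ≤ (α/2+β)*D := by
    have h1 : X ≤ ∫ x in (-1:ℝ)..1,
        ((α/2) * ((((2:ℝ) - (2^2-2)*x^2)/(1-x^2)^2) * (g x)^2)
          + β * ((((1:ℝ) - (1^2-1)*x^2)/(1-x^2)^2) * (g x)^2)) := by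
      apply intervalIntegral.integral_mono_on (by norm_num) hintW
        (((hintV 2 (by norm_num) (by norm_num)).const_mul (α/2)).add
          ((hintV 1 (by norm_num) (by norm_num)).const_mul β)) hptw1
    rw [intervalIntegral.integral_add
        ((hintV 2 (by norm_num) (by norm_num)).const_mul (α/2))
        ((hintV 1 (by norm_num) (by norm_num)).const_mul β),
      intervalIntegral.integral_const_mul, intervalIntegral.integral_const_mul] at h1
    have h2 : (α/2) * (∫ x in (-1:ℝ)..1, (((2:ℝ) - (2^2-2)*x^2)/(1-x^2)^2) * (g x)^2)
        ≤ (α/2)*D := by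
      apply mul_le_mul_of_nonneg_left key2 (by linarith)
    have h3 : β * (∫ x in (-1:ℝ)..1, (((1:ℝ) - (1^2-1)*x^2)/(1-x^2)^2) * (g x)^2)
        ≤ β*D := by
      apply mul_le_mul_of_nonneg_left key1 hβ
    linarith
  -- D ≤ lam/2 X + 1/(2 lam) I
  have hmain : D ≤ (lam/2)*X + (1/(2*lam))*I := by
    have h1 : D = ∫ x in (-1:ℝ)..1, -(g x * f' x) := by
      rw [intervalIntegral.integral_neg, hIBP]; rw [hD]; ring
    have h2 : (∫ x in (-1:ℝ)..1, -(g x * f' x)) ≤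
        ∫ x in (-1:ℝ)..1, ((lam/2) * ((g x)^2 / ((1 - x^2) + ρ*(1 - x^2)^3))
          + (1/(2*lam)) * (((1 - x^2) + ρ*(1 - x^2)^3) * (f' x)^2)) := by
      apply intervalIntegral.integral_mono_on (by norm_num) hintgf.neg
        ((hintW.const_mul (lam/2)).add (hintwf2.const_mul (1/(2*lam)))) hptw2
    rw [intervalIntegral.integral_add (hintW.const_mul (lam/2)) (hintwf2.const_mul (1/(2*lam))),
      intervalIntegral.integral_const_mul, intervalIntegral.integral_const_mul] at h2
    rw [h1]
    exact h2
  -- conclude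
  have hlamX : lam*X ≤ D := by
    calc lam*X ≤ lam*((α/2+β)*D) := mul_le_mul_of_nonneg_left hXle hl0.le
      _ = (lam*(α/2+β))*D := by ring
      _ ≤ 1*D := mul_le_mul_of_nonneg_right hsum hD0
      _ = D := one_mul D
  have hfin : D/2 ≤ (1/(2*lam))*I := by nlinarith
  have h6 : 2*lam*((1/(2*lam))*I) = I := by field_simp
  have : lam*D ≤ I := by nlinarith [mul_le_mul_of_nonneg_left hfin (by positivity : (0:ℝ) ≤ 2*lam)]
  calc (∫ x in (-1:ℝ)..1, ((1 - x^2) + ρ*(1 - x^2)^3) * (f' x)^2) = I := rfl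
    _ ≥ lam * D := this
end

section
/- The integral ∫₋₁¹ dx/√((1−x²)(1+(1−x²)μ)) tends to 0 as μ → ∞. -/
/-!
Dominated convergence. With `t = 1 - x²`, the integrand `1 / √(t (1 + t μ))` tends to `0` as
`μ → ∞` for every `x ∈ [-1, 1]`, and for `μ ≥ 0` it is bounded by `1 / √(1 - x²)`, which is
integrable on `[-1, 1]` as the derivative of `arcsin`.
-/

open Filter Real Set

lemma one_div_sqrt_mul_one_add_mul_le {t μ : ℝ} (ht : 0 ≤ t) (hμ : 0 ≤ μ) :
    1 / √(t * (1 + t * μ)) ≤ 1 / √t := by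
  rcases ht.eq_or_lt with rfl | ht
  · simp
  · gcongr
    nlinarith [mul_nonneg ht.le (mul_nonneg ht.le hμ)]

lemma tendsto_one_div_sqrt_mul_one_add_mul {t : ℝ} (ht : 0 ≤ t) :
    Tendsto (fun μ => 1 / √(t * (1 + t * μ))) atTop (nhds 0) := by
  rcases ht.eq_or_lt with rfl | ht
  · simp
  · have hlin : Tendsto (fun μ => t * (1 + t * μ)) atTop atTop :=
      (tendsto_atTop_add_const_left _ 1 (tendsto_id.const_mul_atTop ht)).const_mul_atTop ht
    exact (tendsto_inv_atTop_zero.comp (tendsto_sqrt_atTop.comp hlin)).congr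
      fun _ => inv_eq_one_div _

lemma intervalIntegrable_one_div_sqrt_one_sub_sq :
    IntervalIntegrable (fun x => 1 / √(1 - x ^ 2)) MeasureTheory.volume (-1) 1 := by
  refine intervalIntegral.intervalIntegrable_deriv_of_nonneg continuous_arcsin.continuousOn
    (fun x hx => ?_) (fun x _ => by positivity)
  obtain ⟨hx₁, hx₂⟩ : -1 < x ∧ x < 1 := by simpa using hx
  exact hasDerivAt_arcsin hx₁.ne' hx₂.ne

theorem stmt_12 :
    Tendsto
      (fun μ : ℝ =>
        ∫ x in (-1:ℝ)..1, 1 / Real.sqrt ((1 - x ^ 2) * (1 + (1 - x ^ 2) * μ)))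
      atTop (nhds 0) := by
  have hsq : ∀ x ∈ uIoc (-1 : ℝ) 1, 0 ≤ 1 - x ^ 2 := fun x hx => by
    rw [uIoc_of_le (by norm_num)] at hx
    nlinarith [hx.1, hx.2]
  simpa using intervalIntegral.tendsto_integral_filter_of_dominated_convergence
    (F := fun μ x => 1 / √((1 - x ^ 2) * (1 + (1 - x ^ 2) * μ))) (f := fun _ => 0)
    (fun x => 1 / √(1 - x ^ 2))
    (Eventually.of_forall fun μ => (by fun_prop : Measurable _).aestronglyMeasurable)
    ((eventually_ge_atTop 0).mono fun μ hμ => Eventually.of_forall fun x hx => by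
      rw [norm_of_nonneg (by positivity)]
      exact one_div_sqrt_mul_one_add_mul_le (hsq x hx) hμ)
    intervalIntegrable_one_div_sqrt_one_sub_sq
    (Eventually.of_forall fun x hx => tendsto_one_div_sqrt_mul_one_add_mul (hsq x hx))
end

section
/- If ḡ : [-1,1] → ℝ is continuous, positive on (-1,1), and satisfies ḡ(x) ≤ 2(1−|x|) with strict inequality somewhere, then the diameter D = ∫₋₁¹ dx/√(ḡ(x)) satisfies D > 2√2. -/
open MeasureTheory

namespace Stmt18Aux

noncomputable def Fr : ℝ → ℝ := fun x => (2*(1-|x|)) ^ (-(1/2):ℝ)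

lemma int02 : ∫ x in (0:ℝ)..2, x ^ (-(1/2):ℝ) = 2 * Real.sqrt 2 := by
  rw [integral_rpow (Or.inl (by norm_num))]
  rw [Real.zero_rpow (by norm_num), Real.sqrt_eq_rpow]
  field_simp
  norm_num

lemma int01 : ∫ x in (0:ℝ)..1, (2*(1-x)) ^ (-(1/2):ℝ) = Real.sqrt 2 := by
  have h1 : (∫ x in (0:ℝ)..1, (fun y : ℝ => (2*y) ^ (-(1/2):ℝ)) (1 - x))
      = ∫ x in (1-(1:ℝ))..(1-0), (2*x) ^ (-(1/2):ℝ) :=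
    intervalIntegral.integral_comp_sub_left (fun y : ℝ => (2*y) ^ (-(1/2):ℝ)) 1
  simp only [sub_self, sub_zero] at h1
  have h2 : (∫ x in (0:ℝ)..1, (2*x) ^ (-(1/2):ℝ))
      = (2:ℝ)⁻¹ • ∫ x in (2*(0:ℝ))..(2*1), x ^ (-(1/2):ℝ) :=
    intervalIntegral.integral_comp_mul_left (fun y : ℝ => y ^ (-(1/2):ℝ)) (by norm_num)
  rw [h1, h2]
  norm_num [int02]
  ring

lemma ii01 : IntervalIntegrable (fun x : ℝ => (2*(1-x)) ^ (-(1/2):ℝ)) volume 0 1 := by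
  have h0 : IntervalIntegrable (fun y : ℝ => y ^ (-(1/2):ℝ)) volume 0 2 :=
    intervalIntegral.intervalIntegrable_rpow' (by norm_num)
  have h1 := (h0.comp_mul_left (c := 2) enorm_ne_top enorm_ne_top)
  norm_num at h1
  have h2 := h1.comp_sub_left 1
  norm_num at h2
  exact h2.symm

lemma Fr_eq01 : Set.EqOn Fr (fun x : ℝ => (2*(1-x)) ^ (-(1/2):ℝ)) (Set.uIcc (0:ℝ) 1) := by
  intro x hx
  rw [Set.uIcc_of_le (by norm_num)] at hx
  simp only [Fr, abs_of_nonneg hx.1]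

lemma iiFr01 : IntervalIntegrable Fr volume 0 1 := by
  refine ii01.congr ?_
  intro x hx
  exact (Fr_eq01 (Set.uIoc_subset_uIcc hx)).symm

lemma intFr01 : ∫ x in (0:ℝ)..1, Fr x = Real.sqrt 2 := by
  rw [intervalIntegral.integral_congr Fr_eq01, int01]

lemma Fr_even : ∀ x : ℝ, Fr (-x) = Fr x := by
  intro x; simp [Fr, abs_neg]

lemma intFrm : ∫ x in (-1:ℝ)..0, Fr x = Real.sqrt 2 := by
  have := intervalIntegral.integral_comp_neg (a := (0:ℝ)) (b := 1) Fr
  simp only [neg_zero] at this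
  rw [← this]
  simp only [Fr_even]
  exact intFr01

lemma iiFrm : IntervalIntegrable Fr volume (-1) 0 := by
  have h := (IntervalIntegrable.iff_comp_neg enorm_ne_top).mp iiFr01.symm
  simp only [Fr_even, neg_zero] at h
  exact h

lemma intFr : ∫ x in Set.Ioo (-1:ℝ) 1, Fr x = 2 * Real.sqrt 2 := by
  have h := intervalIntegral.integral_add_adjacent_intervals iiFrm iiFr01
  rw [intFrm, intFr01] at h
  rw [← MeasureTheory.integral_Ioc_eq_integral_Ioo,
    ← intervalIntegral.integral_of_le (by norm_num : (-1:ℝ) ≤ 1), ← h]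
  ring

lemma integFr : IntegrableOn Fr (Set.Ioo (-1:ℝ) 1) := by
  have h := iiFrm.trans iiFr01
  rw [intervalIntegrable_iff_integrableOn_Ioo_of_le (by norm_num : (-1:ℝ) ≤ 1)] at h
  exact h

lemma key {y : ℝ} (hy : 0 ≤ y) : y ^ (-(1/2):ℝ) = 1 / Real.sqrt y := by
  rw [Real.rpow_neg hy, one_div, Real.sqrt_eq_rpow]
  norm_num

lemma lintFr : ∫⁻ x in Set.Ioo (-1:ℝ) 1, ENNReal.ofReal (Fr x) =
    ENNReal.ofReal (2 * Real.sqrt 2) := by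
  rw [← intFr]
  refine (MeasureTheory.ofReal_integral_eq_lintegral_ofReal integFr ?_).symm
  refine (MeasureTheory.ae_restrict_iff' measurableSet_Ioo).mpr (ae_of_all _ ?_)
  intro x hx
  have : (0:ℝ) ≤ 2*(1-|x|) := by
    have := abs_lt.mpr ⟨hx.1, hx.2⟩
    nlinarith
  exact Real.rpow_nonneg this _

end Stmt18Aux

open Stmt18Aux
theorem stmt_18 (g : ℝ → ℝ)
    (hcont : ContinuousOn g (Set.Icc (-1:ℝ) 1))
    (hpos : ∀ x ∈ Set.Ioo (-1:ℝ) 1, 0 < g x)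
    (hle : ∀ x ∈ Set.Icc (-1:ℝ) 1, g x ≤ 2 * (1 - |x|))
    (hstrict : ∃ x ∈ Set.Icc (-1:ℝ) 1, g x < 2 * (1 - |x|)) :
    ∫⁻ x in Set.Ioo (-1:ℝ) 1, ENNReal.ofReal (1 / Real.sqrt (g x)) >
      ENNReal.ofReal (2 * Real.sqrt 2) := by
  -- g is nonnegative on the closed interval
  have gnn : ∀ x ∈ Set.Icc (-1:ℝ) 1, 0 ≤ g x := by
    intro x hx
    by_cases hxo : x ∈ Set.Ioo (-1:ℝ) 1
    · exact (hpos x hxo).le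
    · have hcl : x ∈ closure (Set.Ioo (-1:ℝ) 1) := by
        rw [closure_Ioo (by norm_num : (-1:ℝ) ≠ 1)]; exact hx
      have hne : (nhdsWithin x (Set.Ioo (-1:ℝ) 1)).NeBot :=
        mem_closure_iff_nhdsWithin_neBot.mp hcl
      have ht : Filter.Tendsto g (nhdsWithin x (Set.Ioo (-1:ℝ) 1)) (nhds (g x)) :=
        (hcont x hx).mono Set.Ioo_subset_Icc_self
      exact ge_of_tendsto ht (eventually_mem_nhdsWithin.mono fun y hy => (hpos y hy).le)
  -- the strict point is interior
  obtain ⟨x₀, hx₀Icc, hx₀lt⟩ := hstrict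
  have hx₀ : x₀ ∈ Set.Ioo (-1:ℝ) 1 := by
    rcases lt_or_eq_of_le hx₀Icc.1 with h1 | h1
    · rcases lt_or_eq_of_le hx₀Icc.2 with h2 | h2
      · exact ⟨h1, h2⟩
      · exfalso
        have h3 := gnn x₀ hx₀Icc
        subst h2
        norm_num at hx₀lt
        linarith
    · exfalso
      have h3 := gnn x₀ hx₀Icc
      rw [← h1] at hx₀lt h3
      norm_num at hx₀lt
      linarith
  have hM₀ : (0:ℝ) < 2 * (1 - |x₀|) := by
    have := abs_lt.mpr ⟨hx₀.1, hx₀.2⟩; nlinarith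
  have hg₀ : 0 < g x₀ := hpos x₀ hx₀
  -- the gap function
  set φ : ℝ → ℝ := fun x => 1 / Real.sqrt (g x) - 1 / Real.sqrt (2*(1-|x|)) with hφdef
  have hφ0 : 0 < φ x₀ := by
    have hs1 : Real.sqrt (g x₀) < Real.sqrt (2*(1-|x₀|)) :=
      Real.sqrt_lt_sqrt hg₀.le hx₀lt
    have hs2 : 0 < Real.sqrt (g x₀) := Real.sqrt_pos.mpr hg₀
    have := one_div_lt_one_div_of_lt hs2 hs1
    simp only [hφdef]; linarith
  have hgc : ContinuousAt g x₀ :=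
    hcont.continuousAt (Icc_mem_nhds hx₀.1 hx₀.2)
  have hφc : ContinuousAt φ x₀ := by
    have h1 : ContinuousAt (fun x => 1 / Real.sqrt (g x)) x₀ := by
      refine ContinuousAt.div continuousAt_const
        (Real.continuous_sqrt.continuousAt.comp hgc) ?_
      exact (Real.sqrt_pos.mpr hg₀).ne'
    have h2 : ContinuousAt (fun x : ℝ => 1 / Real.sqrt (2*(1-|x|))) x₀ := by
      refine ContinuousAt.div continuousAt_const ?_ ?_
      · exact (Real.continuous_sqrt.comp
          (continuous_const.mul (continuous_const.sub continuous_abs))).continuousAt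
      · exact (Real.sqrt_pos.mpr hM₀).ne'
    exact h1.sub h2
  set c : ℝ := φ x₀ / 2 with hcdef
  have hc : 0 < c := by positivity
  -- a small interval where the gap is at least c
  have hS : (φ ⁻¹' Set.Ioi c) ∩ Set.Ioo (-1:ℝ) 1 ∈ nhds x₀ := by
    refine Filter.inter_mem ?_ (isOpen_Ioo.mem_nhds hx₀)
    exact hφc (Ioi_mem_nhds (by simp only [hcdef]; linarith))
  obtain ⟨a, b, hab, hsub⟩ := mem_nhds_iff_exists_Ioo_subset.mp hS
  have habs : Set.Ioo a b ⊆ Set.Ioo (-1:ℝ) 1 := fun x hx => (hsub hx).2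
  have hablt : a < b := hab.1.trans hab.2
  -- the comparison function
  set G : ℝ → ENNReal := fun x =>
    (Set.Ioo a b).indicator (fun _ => ENNReal.ofReal c) x + ENNReal.ofReal (Fr x) with hGdef
  -- pointwise bound on Ioo (-1) 1
  have hFrle : ∀ x ∈ Set.Ioo (-1:ℝ) 1, Fr x ≤ 1 / Real.sqrt (g x) := by
    intro x hx
    have hM : (0:ℝ) ≤ 2*(1-|x|) := by
      have := abs_lt.mpr ⟨hx.1, hx.2⟩; nlinarith
    rw [Fr, key hM]
    refine one_div_le_one_div_of_le (Real.sqrt_pos.mpr (hpos x hx)) ?_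
    exact Real.sqrt_le_sqrt (hle x (Set.Ioo_subset_Icc_self hx))
  have hGle : ∀ x ∈ Set.Ioo (-1:ℝ) 1, G x ≤ ENNReal.ofReal (1 / Real.sqrt (g x)) := by
    intro x hx
    by_cases hxab : x ∈ Set.Ioo a b
    · have hφx : c < φ x := (hsub hxab).1
      have hM : (0:ℝ) ≤ 2*(1-|x|) := by
        have := abs_lt.mpr ⟨hx.1, hx.2⟩; nlinarith
      have hFrnn : 0 ≤ Fr x := Real.rpow_nonneg hM _
      simp only [hGdef, Set.indicator_of_mem hxab]
      rw [← ENNReal.ofReal_add hc.le hFrnn]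
      refine ENNReal.ofReal_le_ofReal ?_
      have hkey : Fr x = 1 / Real.sqrt (2*(1-|x|)) := key hM
      simp only [hφdef] at hφx
      rw [hkey]; linarith
    · simp only [hGdef, Set.indicator_of_notMem hxab, zero_add]
      exact ENNReal.ofReal_le_ofReal (hFrle x hx)
  -- integrate
  have hmain : ∫⁻ x in Set.Ioo (-1:ℝ) 1, G x ≤
      ∫⁻ x in Set.Ioo (-1:ℝ) 1, ENNReal.ofReal (1 / Real.sqrt (g x)) :=
    lintegral_mono_ae ((ae_restrict_iff' measurableSet_Ioo).mpr (ae_of_all _ hGle))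
  have hGint : ∫⁻ x in Set.Ioo (-1:ℝ) 1, G x =
      ENNReal.ofReal c * ENNReal.ofReal (b - a) + ENNReal.ofReal (2 * Real.sqrt 2) := by
    have hmeas : Measurable fun x =>
        (Set.Ioo a b).indicator (fun _ => ENNReal.ofReal c) x :=
      measurable_const.indicator measurableSet_Ioo
    rw [hGdef]
    rw [lintegral_add_left hmeas]
    rw [lintFr]
    congr 1
    rw [lintegral_indicator measurableSet_Ioo, lintegral_const]
    rw [Measure.restrict_restrict measurableSet_Ioo,
      Measure.restrict_apply MeasurableSet.univ, Set.univ_inter,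
      Set.inter_eq_self_of_subset_left habs, Real.volume_Ioo]
  rw [gt_iff_lt]
  calc ENNReal.ofReal (2 * Real.sqrt 2)
      < ENNReal.ofReal c * ENNReal.ofReal (b - a) + ENNReal.ofReal (2 * Real.sqrt 2) := by
        rw [add_comm]
        refine ENNReal.lt_add_right ENNReal.ofReal_ne_top ?_
        refine mul_ne_zero ?_ ?_
        · simpa using hc
        · simpa using sub_pos.mpr hablt
    _ = ∫⁻ x in Set.Ioo (-1:ℝ) 1, G x := hGint.symm
    _ ≤ _ := hmain
end

section
/- For ω = √(λ−1) with λ > 1, the function f(x) = (1/√(1−x²))·(x·cos((ω/2)·log((1−x)/(1+x))) − ω·sin((ω/2)·log((1−x)/(1+x)))) satisfies the ODE ((1−x²)² f')' + λ f = 0 on (−1,1). -/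
open Real Set

private lemma aux_theta (ω y : ℝ) (h1 : 0 < 1 - y) (h2 : 0 < 1 + y) :
    HasDerivAt (fun t : ℝ => (ω / 2) * Real.log ((1 - t) / (1 + t)))
      (-ω / (1 - y ^ 2)) y := by
  have ha : HasDerivAt (fun t : ℝ => 1 - t) (-1) y := by
    simpa using (hasDerivAt_id y).const_sub 1
  have hb : HasDerivAt (fun t : ℝ => 1 + t) 1 y := by
    simpa using (hasDerivAt_id y).const_add 1
  have hu : HasDerivAt (fun t : ℝ => (1 - t) / (1 + t))
      (((-1) * (1 + y) - (1 - y) * 1) / (1 + y) ^ 2) y := ha.div hb h2.ne'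
  have hlog := (hu.log (by positivity)).const_mul (ω / 2)
  refine hlog.congr_deriv (Eq.symm ?_)
  have h3 : (0:ℝ) < 1 - y ^ 2 := by nlinarith
  field_simp
  ring

private lemma aux_sqrt (y : ℝ) (h : 0 < 1 - y ^ 2) :
    HasDerivAt (fun t : ℝ => Real.sqrt (1 - t ^ 2))
      (-y / Real.sqrt (1 - y ^ 2)) y := by
  have hi : HasDerivAt (fun t : ℝ => 1 - t ^ 2) (-(2 * y)) y := by
    simpa using ((hasDerivAt_pow 2 y).const_sub 1)
  have hs : 0 < Real.sqrt (1 - y ^ 2) := Real.sqrt_pos.mpr h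
  convert hi.sqrt h.ne' using 1
  field_simp

theorem stmt_19 (lam : ℝ) (hlam : 1 < lam) (ω : ℝ) (hω : ω = Real.sqrt (lam - 1))
    (f : ℝ → ℝ)
    (hf : f = fun x => (1 / Real.sqrt (1 - x ^ 2)) *
      (x * Real.cos ((ω / 2) * Real.log ((1 - x) / (1 + x))) -
        ω * Real.sin ((ω / 2) * Real.log ((1 - x) / (1 + x))))) :
    ∀ x ∈ Set.Ioo (-1:ℝ) 1,
      deriv (fun y => (1 - y ^ 2) ^ 2 * deriv f y) x + lam * f x = 0 := by
  have hω2 : ω ^ 2 = lam - 1 := by rw [hω]; exact Real.sq_sqrt (by linarith)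
  -- derivative of f at any point of Ioo
  have derivF : ∀ y ∈ Set.Ioo (-1:ℝ) 1, HasDerivAt f
      (lam * Real.cos ((ω / 2) * Real.log ((1 - y) / (1 + y))) /
        ((1 - y ^ 2) * Real.sqrt (1 - y ^ 2))) y := by
    intro y hy
    obtain ⟨hy1, hy2⟩ := hy
    have h1 : (0:ℝ) < 1 - y := by linarith
    have h2 : (0:ℝ) < 1 + y := by linarith
    have h3 : (0:ℝ) < 1 - y ^ 2 := by nlinarith
    have hs : 0 < Real.sqrt (1 - y ^ 2) := Real.sqrt_pos.mpr h3
    have hss : Real.sqrt (1 - y ^ 2) * Real.sqrt (1 - y ^ 2) = 1 - y ^ 2 :=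
      Real.mul_self_sqrt h3.le
    have hθ := aux_theta ω y h1 h2
    have hS := aux_sqrt y h3
    have hinv : HasDerivAt (fun t : ℝ => 1 / Real.sqrt (1 - t ^ 2))
        (-(-y / Real.sqrt (1 - y ^ 2)) / (Real.sqrt (1 - y ^ 2)) ^ 2) y := by
      simpa [one_div] using hS.fun_inv hs.ne'
    have hcos := hθ.cos
    have hsin := hθ.sin
    have hA : HasDerivAt (fun t : ℝ => t * Real.cos ((ω / 2) * Real.log ((1 - t) / (1 + t))))
        (1 * Real.cos ((ω / 2) * Real.log ((1 - y) / (1 + y))) +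
          y * (-Real.sin ((ω / 2) * Real.log ((1 - y) / (1 + y))) * (-ω / (1 - y ^ 2)))) y :=
      (hasDerivAt_id y).mul hcos
    have hB : HasDerivAt (fun t : ℝ => ω * Real.sin ((ω / 2) * Real.log ((1 - t) / (1 + t))))
        (ω * (Real.cos ((ω / 2) * Real.log ((1 - y) / (1 + y))) * (-ω / (1 - y ^ 2)))) y :=
      hsin.const_mul ω
    have hfull := hinv.fun_mul (hA.fun_sub hB)
    rw [hf]
    refine hfull.congr_deriv (Eq.symm ?_)
    set c := Real.cos ((ω / 2) * Real.log ((1 - y) / (1 + y)))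
    set si := Real.sin ((ω / 2) * Real.log ((1 - y) / (1 + y)))
    field_simp
    linear_combination (-(c * Real.sqrt (1 - y ^ 2) ^ 2)) * hω2 + (c * y ^ 2 - y * ω * si) * hss
  intro x hx
  obtain ⟨hx1, hx2⟩ := hx
  have h1 : (0:ℝ) < 1 - x := by linarith
  have h2 : (0:ℝ) < 1 + x := by linarith
  have h3 : (0:ℝ) < 1 - x ^ 2 := by nlinarith
  have hs : 0 < Real.sqrt (1 - x ^ 2) := Real.sqrt_pos.mpr h3
  have hss : Real.sqrt (1 - x ^ 2) * Real.sqrt (1 - x ^ 2) = 1 - x ^ 2 :=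
    Real.mul_self_sqrt h3.le
  -- the function equals h on a neighborhood
  have hev : (fun y => (1 - y ^ 2) ^ 2 * deriv f y) =ᶠ[nhds x]
      (fun y => lam * Real.sqrt (1 - y ^ 2) *
        Real.cos ((ω / 2) * Real.log ((1 - y) / (1 + y)))) := by
    filter_upwards [isOpen_Ioo.mem_nhds ⟨hx1, hx2⟩] with y hy
    obtain ⟨hy1, hy2⟩ := hy
    have h3' : (0:ℝ) < 1 - y ^ 2 := by nlinarith
    have hs' : 0 < Real.sqrt (1 - y ^ 2) := Real.sqrt_pos.mpr h3'
    have hss' : Real.sqrt (1 - y ^ 2) * Real.sqrt (1 - y ^ 2) = 1 - y ^ 2 :=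
      Real.mul_self_sqrt h3'.le
    rw [(derivF y ⟨hy1, hy2⟩).deriv]
    field_simp
    linear_combination
      (-(Real.cos (ω * Real.log ((1 - y) / (1 + y)) / 2))) * hss'
  have hθ := aux_theta ω x h1 h2
  have hS := aux_sqrt x h3
  have hC : HasDerivAt (fun y => lam * Real.sqrt (1 - y ^ 2) *
      Real.cos ((ω / 2) * Real.log ((1 - y) / (1 + y)))) (-(lam * f x)) x := by
    have := ((hS.const_mul lam).fun_mul hθ.cos)
    refine this.congr_deriv (Eq.symm ?_)
    rw [hf]
    field_simp
    linear_combination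
      (-(ω * Real.sin (ω * Real.log ((1 - x) / (1 + x)) / 2))) * hss
  rw [hev.deriv_eq, hC.deriv]
  ring
end
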